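/- arXiv:2011.02653 — 2 statements merged into one kernel-verified Lean document; each statement's English description precedes it below -/
import Mathlib

section
/- Let G be a 4-regular graph on n vertices. If n balls are sequentially placed by choosing a uniformly random edge and placing the ball in the lesser-loaded endpoint, then with high probability the maximum load is at least Ω(log n / log log n); i.e., no power-of-two-choices improvement over single-choice occurs. -/
set_option maxHeartbeats 1000000

open Finset

section Counting
variable {E : Type*} [Fintype E] [DecidableEq E] {n : ℕ}

lemma card_fixed_fiber (e : E) (s : Finset (Fin n)) :
    Fintype.card {ω : Fin n → E // ∀ b, ω b = e ↔ b ∈ s}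
      = (Fintype.card E - 1) ^ (n - s.card) := by
  rw [Fintype.card_congr
    (Equiv.subtypePiEquivPi (p := fun (b : Fin n) (x : E) => x = e ↔ b ∈ s)),
    Fintype.card_pi]
  have hcard : ∀ b : Fin n, Fintype.card {x : E // x = e ↔ b ∈ s}
      = if b ∈ s then 1 else Fintype.card E - 1 := by
    intro b
    by_cases hb : b ∈ s
    · simp only [hb, if_true]
      rw [Fintype.card_congr (Equiv.subtypeEquivRight (q := fun x => x = e) (by tauto))]
      exact Fintype.card_subtype_eq e
    · simp only [hb, if_false]
      rw [Fintype.card_congr (Equiv.subtypeEquivRight (q := fun x => ¬ x = e) (by tauto))]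
      rw [Fintype.card_subtype_compl, Fintype.card_subtype_eq]
  simp only [hcard]
  rw [Finset.prod_ite, Finset.prod_const_one, one_mul, Finset.prod_const, Finset.filter_not,
    Finset.filter_mem_eq_inter, Finset.univ_inter, Finset.card_sdiff_of_subset (Finset.subset_univ s),
    Finset.card_univ, Fintype.card_fin]

lemma card_fixed_fiber2 (e f : E) (hef : e ≠ f) (s t : Finset (Fin n)) (hst : Disjoint s t) :
    Fintype.card {ω : Fin n → E // ∀ b, (ω b = e ↔ b ∈ s) ∧ (ω b = f ↔ b ∈ t)}
      = (Fintype.card E - 2) ^ (n - s.card - t.card) := by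
  rw [Fintype.card_congr
    (Equiv.subtypePiEquivPi (p := fun (b : Fin n) (x : E) =>
      (x = e ↔ b ∈ s) ∧ (x = f ↔ b ∈ t))),
    Fintype.card_pi]
  have hcard : ∀ b : Fin n, Fintype.card {x : E // (x = e ↔ b ∈ s) ∧ (x = f ↔ b ∈ t)}
      = if b ∈ s ∨ b ∈ t then 1 else Fintype.card E - 2 := by
    intro b
    by_cases hbs : b ∈ s
    · have hbt : b ∉ t := Finset.disjoint_left.mp hst hbs
      simp only [hbs, hbt, if_true, true_or]
      rw [Fintype.card_congr (Equiv.subtypeEquivRight (q := fun x => x = e) ?_)]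
      · exact Fintype.card_subtype_eq e
      · intro x; constructor
        · rintro ⟨h1, _⟩; tauto
        · rintro rfl
          exact ⟨by tauto, by simp only [iff_false, hbt]; exact hef⟩
    · by_cases hbt : b ∈ t
      · simp only [hbs, hbt, if_true, or_true]
        rw [Fintype.card_congr (Equiv.subtypeEquivRight (q := fun x => x = f) ?_)]
        · exact Fintype.card_subtype_eq f
        · intro x; constructor
          · rintro ⟨_, h2⟩; tauto
          · rintro rfl
            exact ⟨by simp only [iff_false, hbs]; exact (Ne.symm hef), by tauto⟩
      · simp only [hbs, hbt, if_false, or_self]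
        rw [Fintype.card_congr (Equiv.subtypeEquivRight (q := fun x => ¬ (x = e ∨ x = f))
          (by tauto))]
        rw [Fintype.card_subtype_compl]
        congr 1
        rw [Fintype.card_subtype]
        have : (univ.filter fun x => x = e ∨ x = f) = {e, f} := by
          ext x; simp [Finset.mem_insert]
        rw [this, Finset.card_pair hef]
  simp only [hcard]
  rw [Finset.prod_ite, Finset.prod_const_one, one_mul, Finset.prod_const]
  congr 1
  have : (univ.filter fun x => ¬ (x ∈ s ∨ x ∈ t)) = (univ \ s) \ t := by
    ext x; simp [not_or]
  rw [this, Finset.card_sdiff_of_subset, Finset.card_sdiff_of_subset (Finset.subset_univ s), Finset.card_univ,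
    Fintype.card_fin]
  · intro x hx
    simp only [Finset.mem_sdiff, Finset.mem_univ, true_and]
    exact Finset.disjoint_right.mp hst hx

end Counting

section Counting2
variable {E : Type*} [Fintype E] [DecidableEq E] {n : ℕ}

/-- number of balls on cell `e` -/
def fibc (ω : Fin n → E) (e : E) : ℕ := (Finset.univ.filter fun b => ω b = e).card

lemma card_fiber_is (e : E) (s : Finset (Fin n)) :
    ((univ : Finset (Fin n → E)).filter fun ω => univ.filter (fun b => ω b = e) = s).card
      = (Fintype.card E - 1) ^ (n - s.card) := by
  have hiff : ∀ ω : Fin n → E, (univ.filter (fun b => ω b = e) = s) ↔ (∀ b, ω b = e ↔ b ∈ s) := by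
    intro ω; simp only [Finset.ext_iff, Finset.mem_filter, Finset.mem_univ, true_and]
  rw [Finset.filter_congr (fun ω _ => hiff ω), ← Fintype.card_subtype, card_fixed_fiber e s]

lemma card_fib_eq (e : E) (k : ℕ) :
    ((univ : Finset (Fin n → E)).filter fun ω => fibc ω e = k).card
      = n.choose k * (Fintype.card E - 1) ^ (n - k) := by
  have hsplit : ((univ : Finset (Fin n → E)).filter fun ω => fibc ω e = k)
      = (Finset.powersetCard k (univ : Finset (Fin n))).biUnion
          (fun s => univ.filter fun ω => univ.filter (fun b => ω b = e) = s) := by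
    ext ω
    simp only [Finset.mem_filter, Finset.mem_univ, true_and, Finset.mem_biUnion,
      Finset.mem_powersetCard_univ, fibc]
    constructor
    · intro h; exact ⟨_, (Finset.mem_filter.mp h).2, rfl⟩
    · rintro ⟨s, hs, rfl⟩; exact Finset.mem_filter.mpr ⟨Finset.mem_univ _, hs⟩
  rw [hsplit, Finset.card_biUnion]
  · rw [Finset.sum_congr rfl (fun s hs => ?_), Finset.sum_const,
      Finset.card_powersetCard, Finset.card_univ, Fintype.card_fin, smul_eq_mul]
    rw [card_fiber_is e s, (Finset.mem_powersetCard_univ.mp hs)]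
  · intro s hs t ht hst
    rw [Function.onFun, Finset.disjoint_left]
    intro ω hω hω'
    simp only [Finset.mem_filter] at hω hω'
    exact hst (hω.2 ▸ hω'.2)

lemma card_fib_eq2 (e f : E) (hef : e ≠ f) (k : ℕ) :
    ((univ : Finset (Fin n → E)).filter fun ω => fibc ω e = k ∧ fibc ω f = k).card
      = n.choose k * ((n - k).choose k) * (Fintype.card E - 2) ^ (n - k - k) := by
  have hpiece : ∀ s t : Finset (Fin n), Disjoint s t →
      ((univ : Finset (Fin n → E)).filter fun ω =>
          univ.filter (fun b => ω b = e) = s ∧ univ.filter (fun b => ω b = f) = t).card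
        = (Fintype.card E - 2) ^ (n - s.card - t.card) := by
    intro s t hst
    have hiff : ∀ ω : Fin n → E,
        (univ.filter (fun b => ω b = e) = s ∧ univ.filter (fun b => ω b = f) = t)
          ↔ (∀ b, (ω b = e ↔ b ∈ s) ∧ (ω b = f ↔ b ∈ t)) := by
      intro ω
      simp only [Finset.ext_iff, Finset.mem_filter, Finset.mem_univ, true_and]
      exact forall_and.symm
    rw [Finset.filter_congr (fun ω _ => hiff ω), ← Fintype.card_subtype,
      card_fixed_fiber2 e f hef s t hst]
  have hsplit : ((univ : Finset (Fin n → E)).filter fun ω => fibc ω e = k ∧ fibc ω f = k)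
      = (Finset.powersetCard k (univ : Finset (Fin n))).biUnion
          (fun s => (Finset.powersetCard k sᶜ).biUnion
            (fun t => univ.filter fun ω =>
              univ.filter (fun b => ω b = e) = s ∧ univ.filter (fun b => ω b = f) = t)) := by
    ext ω
    simp only [Finset.mem_filter, Finset.mem_univ, true_and, Finset.mem_biUnion,
      Finset.mem_powersetCard, fibc]
    constructor
    · intro h; obtain ⟨_, h1, h2⟩ := Finset.mem_filter.mp h
      refine ⟨_, ⟨Finset.subset_univ _, h1⟩, _, ⟨?_, h2⟩, rfl, rfl⟩
      intro b hb
      simp only [Finset.mem_filter, Finset.mem_univ, true_and] at hb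
      simp only [Finset.mem_compl, Finset.mem_filter, Finset.mem_univ, true_and]
      rw [hb]
      exact fun h => hef h.symm
    · rintro ⟨s, hs, t, ht, rfl, rfl⟩; exact Finset.mem_filter.mpr ⟨Finset.mem_univ _, hs.2, ht.2⟩
  have hinner : ∀ s ∈ Finset.powersetCard k (univ : Finset (Fin n)),
      ((Finset.powersetCard k sᶜ).biUnion
        (fun t => (univ : Finset (Fin n → E)).filter fun ω =>
          univ.filter (fun b => ω b = e) = s ∧ univ.filter (fun b => ω b = f) = t)).card
      = (n - k).choose k * (Fintype.card E - 2) ^ (n - k - k) := by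
    intro s hs
    have hscard : s.card = k := (Finset.mem_powersetCard.mp hs).2
    rw [Finset.card_biUnion]
    · rw [Finset.sum_congr rfl (fun t ht => ?_), Finset.sum_const, Finset.card_powersetCard,
        Finset.card_compl, Fintype.card_fin, hscard, smul_eq_mul]
      have htc : t ⊆ sᶜ ∧ t.card = k := Finset.mem_powersetCard.mp ht
      have hdisj : Disjoint s t := by
        rw [Finset.disjoint_left]
        intro a ha hat
        exact (Finset.mem_compl.mp (htc.1 hat)) ha
      rw [hpiece s t hdisj, hscard, htc.2]
    · intro a ha b hb hab
      rw [Function.onFun, Finset.disjoint_left]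
      intro ω hω hω2
      simp only [Finset.mem_filter] at hω hω2
      exact hab (hω.2.2 ▸ hω2.2.2)
  rw [hsplit, Finset.card_biUnion, Finset.sum_congr rfl hinner, Finset.sum_const,
    Finset.card_powersetCard, Finset.card_univ, Fintype.card_fin, smul_eq_mul, mul_assoc]
  · intro a ha b hb hab
    rw [Function.onFun, Finset.disjoint_left]
    intro ω hω hω2
    simp only [Finset.mem_biUnion, Finset.mem_filter] at hω hω2
    obtain ⟨x, _, hx⟩ := hω; obtain ⟨y, _, hy⟩ := hω2
    exact hab (hx.2.1 ▸ hy.2.1)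

end Counting2

section Moments
variable {E : Type*} [Fintype E] [DecidableEq E] {n : ℕ}

/-- number of cells with exactly `k` balls -/
def Xk (k : ℕ) (ω : Fin n → E) : ℕ := (Finset.univ.filter fun e : E => fibc ω e = k).card

lemma sum_Xk (k : ℕ) :
    ∑ ω : Fin n → E, Xk k ω
      = Fintype.card E * (n.choose k * (Fintype.card E - 1) ^ (n - k)) := by
  have : ∀ ω : Fin n → E, Xk k ω = ∑ e : E, if fibc ω e = k then 1 else 0 := by
    intro ω; rw [Xk, Finset.card_filter]
  simp only [this]
  rw [Finset.sum_comm]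
  have : ∀ e : E, (∑ ω : Fin n → E, if fibc ω e = k then 1 else 0)
      = n.choose k * (Fintype.card E - 1) ^ (n - k) := by
    intro e
    rw [← Finset.card_filter, card_fib_eq]
  simp only [this, Finset.sum_const, Finset.card_univ, smul_eq_mul]

lemma sum_Xk_sq (k : ℕ) :
    ∑ ω : Fin n → E, (Xk k ω) ^ 2
      = Fintype.card E * (n.choose k * (Fintype.card E - 1) ^ (n - k))
        + (Fintype.card E * (Fintype.card E - 1)) *
            (n.choose k * ((n - k).choose k) * (Fintype.card E - 2) ^ (n - k - k)) := by
  have hX : ∀ ω : Fin n → E, (Xk k ω) ^ 2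
      = ∑ e : E, ∑ f : E, (if fibc ω e = k ∧ fibc ω f = k then 1 else 0) := by
    intro ω
    rw [sq, Xk, Finset.card_filter, Finset.sum_mul_sum]
    refine Finset.sum_congr rfl fun e _ => Finset.sum_congr rfl fun f _ => ?_
    by_cases h1 : fibc ω e = k <;> by_cases h2 : fibc ω f = k <;> simp [h1, h2]
  simp only [hX]
  rw [Finset.sum_comm]
  have hswap : ∀ e : E, (∑ ω : Fin n → E, ∑ f : E, if fibc ω e = k ∧ fibc ω f = k then 1 else 0)
      = ∑ f : E, ∑ ω : Fin n → E, (if fibc ω e = k ∧ fibc ω f = k then 1 else 0) := by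
    intro e; rw [Finset.sum_comm]
  simp only [hswap]
  have hpair : ∀ e f : E, (∑ ω : Fin n → E, if fibc ω e = k ∧ fibc ω f = k then 1 else 0)
      = ((univ : Finset (Fin n → E)).filter fun ω => fibc ω e = k ∧ fibc ω f = k).card := by
    intro e f; rw [← Finset.card_filter]
  simp only [hpair]
  have hdiag : ∀ e : E, ((univ : Finset (Fin n → E)).filter
      fun ω => fibc ω e = k ∧ fibc ω e = k).card
      = n.choose k * (Fintype.card E - 1) ^ (n - k) := by
    intro e
    have heq : ((univ : Finset (Fin n → E)).filter fun ω => fibc ω e = k ∧ fibc ω e = k)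
        = (univ : Finset (Fin n → E)).filter fun ω => fibc ω e = k :=
      Finset.filter_congr fun ω _ => and_self_iff
    rw [heq, card_fib_eq]
  have hsplit : ∀ e : E, (∑ f : E, ((univ : Finset (Fin n → E)).filter
      fun ω => fibc ω e = k ∧ fibc ω f = k).card)
      = n.choose k * (Fintype.card E - 1) ^ (n - k)
        + (Fintype.card E - 1) *
          (n.choose k * ((n - k).choose k) * (Fintype.card E - 2) ^ (n - k - k)) := by
    intro e
    rw [← Finset.add_sum_erase _ _ (Finset.mem_univ e), hdiag]
    congr 1
    rw [Finset.sum_congr rfl (fun f hf => card_fib_eq2 e f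
        (fun h => (Finset.ne_of_mem_erase hf) h.symm) k),
      Finset.sum_const, Finset.card_erase_of_mem (Finset.mem_univ e), Finset.card_univ,
      smul_eq_mul]
  simp only [hsplit]
  rw [Finset.sum_add_distrib, Finset.sum_const, Finset.sum_const, Finset.card_univ,
    smul_eq_mul, smul_eq_mul]
  ring

lemma supp_card_bound (k : ℕ) :
    (∑ ω : Fin n → E, Xk k ω) ^ 2
      ≤ ((univ : Finset (Fin n → E)).filter fun ω => ∃ e, fibc ω e = k).card
        * ∑ ω : Fin n → E, (Xk k ω) ^ 2 := by
  classical
  set supp := (univ : Finset (Fin n → E)).filter fun ω => ∃ e, fibc ω e = k with hsupp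
  have h1 : ∑ ω : Fin n → E, Xk k ω = ∑ ω ∈ supp, Xk k ω := by
    rw [hsupp]
    rw [Finset.sum_filter_of_ne]
    intro ω _ hX
    rcases (show ∃ e, fibc ω e = k by simpa [Xk] using hX) with ⟨e, he⟩
    exact ⟨e, he⟩
  have h2 : ∑ ω ∈ supp, (Xk k ω) ^ 2 ≤ ∑ ω : Fin n → E, (Xk k ω) ^ 2 :=
    Finset.sum_le_sum_of_subset (Finset.filter_subset _ _)
  calc (∑ ω : Fin n → E, Xk k ω) ^ 2 = (∑ ω ∈ supp, 1 * Xk k ω) ^ 2 := by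
        rw [h1]; simp
    _ ≤ (∑ ω ∈ supp, 1 ^ 2) * ∑ ω ∈ supp, (Xk k ω) ^ 2 :=
        Finset.sum_mul_sq_le_sq_mul_sq supp _ _
    _ ≤ supp.card * ∑ ω : Fin n → E, (Xk k ω) ^ 2 := by
        rw [show (∑ _ω ∈ supp, 1 ^ 2) = supp.card by simp]
        exact Nat.mul_le_mul_left _ h2

end Moments

section RealHelpers
open Real

lemma exp_le_one_add_two_mul {x : ℝ} (h0 : 0 ≤ x) (h1 : x ≤ 1/2) :
    Real.exp x ≤ 1 + 2 * x := by
  have h2 : 1 - x ≤ Real.exp (-x) := by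
    have := Real.add_one_le_exp (-x); linarith
  have h3 : 0 < 1 - x := by linarith
  have h4 : Real.exp x = 1 / Real.exp (-x) := by
    rw [Real.exp_neg]; field_simp
  rw [h4]
  rw [div_le_iff₀ (Real.exp_pos _)]
  calc (1:ℝ) ≤ (1 + 2*x) * (1 - x) := by nlinarith
    _ ≤ (1 + 2*x) * Real.exp (-x) := by nlinarith [Real.exp_pos (-x)]

lemma exp_third_le_two : Real.exp (1/3) ≤ 2 := by
  have h3 : Real.exp (1/3) ^ (3:ℕ) = Real.exp 1 := by
    rw [← Real.exp_nat_mul]; norm_num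
  nlinarith [Real.exp_pos (1/3), Real.exp_one_lt_d9, h3, sq_nonneg (Real.exp (1/3))]

lemma pow_ratio_le_exp {M : ℝ} (hM : 2 ≤ M) (j : ℕ) :
    (M / (M-1))^j ≤ Real.exp (j / (M-1)) := by
  have h1 : (0:ℝ) < M - 1 := by linarith
  have h2 : M / (M-1) = 1 + 1/(M-1) := by field_simp; ring
  have h3 : (1 + 1/(M-1)) ≤ Real.exp (1/(M-1)) := by
    have := Real.add_one_le_exp (1/(M-1)); linarith
  calc (M/(M-1))^j ≤ (Real.exp (1/(M-1)))^j := by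
        rw [h2]; exact pow_le_pow_left₀ (by positivity) h3 j
    _ = Real.exp (j / (M-1)) := by
        rw [← Real.exp_nat_mul]; ring_nf

end RealHelpers

open Real in
lemma main_count {E : Type*} [Fintype E] [DecidableEq E] {n k : ℕ}
    (hm : Fintype.card E = 4 * n) (hn : 16 ≤ n) (hk1 : 1 ≤ k) (hk2 : 2 * k ≤ n)
    (hδn : 2 * (8*(k:ℝ))^k ≤ (n:ℝ)^(-(1/16:ℝ)) * n)
    (hδ2 : 4*(k:ℝ)/(4*(n:ℝ)-1) ≤ (n:ℝ)^(-(1/16:ℝ))/2)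
    (hhalf : 2*(k:ℝ)/(4*(n:ℝ)-1) ≤ 1/2) :
    (1 - (n:ℝ)^(-(1/16:ℝ))) * (Fintype.card E:ℝ)^n
      ≤ (((univ : Finset (Fin n → E)).filter fun ω => ∃ e, fibc ω e = k).card : ℝ) := by
  set m := Fintype.card E with hmdef
  set δ := (n:ℝ)^(-(1/16:ℝ)) with hδdef
  have hδ0 : 0 ≤ δ := Real.rpow_nonneg (by positivity) _
  have hδ1 : δ ≤ 1 := Real.rpow_le_one_of_one_le_of_nonpos
    (by exact_mod_cast Nat.one_le_iff_ne_zero.mpr (by omega)) (by norm_num)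
  have hkn : k ≤ n := by omega
  have hnR : (16:ℝ) ≤ (n:ℝ) := by exact_mod_cast hn
  set M := (m:ℝ) with hMdef
  have hMval : M = 4*(n:ℝ) := by rw [hMdef, hm]; push_cast; ring
  have hM2 : (2:ℝ) ≤ M := by rw [hMval]; linarith
  have hM1pos : (0:ℝ) < M - 1 := by linarith
  have hm1 : 1 ≤ m := by omega
  have hm2 : 2 ≤ m := by rw [hm]; omega
  have c1 : ((m-1:ℕ):ℝ) = M - 1 := by
    rw [Nat.cast_sub hm1]; norm_num; rfl
  have c2 : ((m-2:ℕ):ℝ) = M - 2 := by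
    rw [Nat.cast_sub hm2]; norm_num; rfl
  set Ch := (n.choose k : ℝ) with hChdef
  set Ch2 := ((n-k).choose k : ℝ) with hCh2def
  set P := Ch * (M-1)^(n-k) with hPdef
  set Q := Ch * Ch2 * (M-2)^(n-k-k) with hQdef
  have hChpos : 0 < Ch := by rw [hChdef]; exact_mod_cast Nat.choose_pos hkn
  have hCh2nn : 0 ≤ Ch2 := by rw [hCh2def]; positivity
  have hCh2le : Ch2 ≤ Ch := by
    rw [hChdef, hCh2def]; exact_mod_cast Nat.choose_le_choose k (Nat.sub_le n k)
  have hM1nn : (0:ℝ) ≤ M - 1 := le_of_lt hM1pos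
  have hM2nn : (0:ℝ) ≤ M - 2 := by linarith
  have hPpos : 0 < P := by
    rw [hPdef]; exact mul_pos hChpos (pow_pos hM1pos _)
  have hQnn : 0 ≤ Q := by
    rw [hQdef]
    exact mul_nonneg (mul_nonneg (le_of_lt hChpos) hCh2nn) (pow_nonneg hM2nn _)
  -- lower bound on choose
  have hChlb : ((n:ℝ)/2)^k / (k:ℝ)^k ≤ Ch := by
    have h1 := Nat.pow_le_choose (α := ℝ) k n
    have h2 : ((n:ℝ)/2)^k ≤ ((n + 1 - k : ℕ):ℝ)^k := by
      apply pow_le_pow_left₀ (by positivity)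
      have h2k : 2*(k:ℝ) ≤ (n:ℝ) := by exact_mod_cast hk2
      have hcc : ((n + 1 - k : ℕ):ℝ) = (n:ℝ) + 1 - k := by
        rw [Nat.cast_sub (by omega)]; push_cast; ring
      rw [hcc]; linarith
    have h3 : ((k:ℝ))^k ≥ ((k.factorial : ℕ):ℝ) := by
      exact_mod_cast Nat.factorial_le_pow k
    have hkpos : (0:ℝ) < (k:ℝ)^k := by
      have : (1:ℝ) ≤ (k:ℝ) := by exact_mod_cast hk1
      positivity
    have hfpos : (0:ℝ) < ((k.factorial : ℕ):ℝ) := by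
      exact_mod_cast Nat.factorial_pos k
    calc ((n:ℝ)/2)^k / (k:ℝ)^k ≤ ((n + 1 - k : ℕ):ℝ)^k / ((k.factorial : ℕ):ℝ) :=
          div_le_div₀ (by positivity) h2 hfpos h3
      _ ≤ Ch := h1
  -- part (a)
  have hstep1 : M^(n-k) ≤ 2*(M-1)^(n-k) := by
    have hr : (M/(M-1))^(n-k) ≤ 2 := by
      calc (M/(M-1))^(n-k) ≤ Real.exp ((n-k:ℕ) / (M-1)) := pow_ratio_le_exp hM2 _
        _ ≤ Real.exp (1/3) := by
            apply Real.exp_le_exp.mpr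
            rw [div_le_iff₀ hM1pos]
            have : ((n-k:ℕ):ℝ) ≤ (n:ℝ) := by exact_mod_cast Nat.sub_le n k
            rw [hMval]; linarith
        _ ≤ 2 := exp_third_le_two
    calc M^(n-k) = (M/(M-1))^(n-k) * (M-1)^(n-k) := by
          rw [div_pow]; field_simp
      _ ≤ 2 * (M-1)^(n-k) := by
          apply mul_le_mul_of_nonneg_right hr (by positivity)
  have ha : M^n ≤ (δ/4) * (M * P) := by
    have hkk : (0:ℝ) < (k:ℝ)^k := by
      have : (1:ℝ) ≤ (k:ℝ) := by exact_mod_cast hk1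
      positivity
    have hn2 : (0:ℝ) < ((n:ℝ)/2)^k := by positivity
    have key : 2 * M^k ≤ (δ/4) * (M * Ch) := by
      have h8 : (8*(k:ℝ))^k = 8^k * (k:ℝ)^k := by rw [mul_pow]
      have hMk : M^k = 8^k * ((n:ℝ)/2)^k := by
        rw [hMval, ← mul_pow]
        congr 1
        ring
      have hCh' : ((n:ℝ)/2)^k ≤ Ch * (k:ℝ)^k := (div_le_iff₀ hkk).mp hChlb
      -- need: 2 * 8^k * (n/2)^k ≤ (δ/4) * (4n) * Ch
      have hδn' : 2 * (8^k * (k:ℝ)^k) ≤ δ * n := by rw [← h8]; exact hδn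
      calc 2 * M^k = 2 * 8^k * ((n:ℝ)/2)^k := by rw [hMk]; ring
        _ ≤ 2 * 8^k * (Ch * (k:ℝ)^k) := by
            apply mul_le_mul_of_nonneg_left hCh' (by positivity)
        _ = (2 * (8^k * (k:ℝ)^k)) * Ch := by ring
        _ ≤ (δ * n) * Ch := mul_le_mul_of_nonneg_right hδn' (le_of_lt hChpos)
        _ = (δ/4) * ((4*(n:ℝ)) * Ch) := by ring
        _ = (δ/4) * (M * Ch) := by rw [hMval]
    calc M^n = M^k * M^(n-k) := by rw [← pow_add]; congr 1; omega
      _ ≤ M^k * (2*(M-1)^(n-k)) := by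
          apply mul_le_mul_of_nonneg_left hstep1 (by positivity)
      _ = (2 * M^k) * (M-1)^(n-k) := by ring
      _ ≤ ((δ/4) * (M * Ch)) * (M-1)^(n-k) := by
          apply mul_le_mul_of_nonneg_right key (by positivity)
      _ = (δ/4) * (M * P) := by rw [hPdef]; ring
  -- part (b)
  have hb : M^n * (M-2)^(n-k-k) ≤ (1 + δ/2) * ((M-1)^(n-k))^2 := by
    have hx0 : (0:ℝ) ≤ 2*(k:ℝ)/(M-1) := by positivity
    have hMm1 : M - 1 = 4*(n:ℝ) - 1 := by rw [hMval]
    have hrat : M^(2*k) ≤ (1 + δ/2) * (M-1)^(2*k) := by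
      have hr : (M/(M-1))^(2*k) ≤ 1 + δ/2 := by
        calc (M/(M-1))^(2*k) ≤ Real.exp ((2*k:ℕ) / (M-1)) := pow_ratio_le_exp hM2 _
          _ ≤ 1 + 2 * (2*(k:ℝ)/(M-1)) := by
              have hcast : ((2*k:ℕ):ℝ) / (M-1) = 2*(k:ℝ)/(M-1) := by push_cast; ring
              rw [hcast]
              apply exp_le_one_add_two_mul hx0
              rw [hMm1]; exact hhalf
          _ ≤ 1 + δ/2 := by
              have : 2 * (2*(k:ℝ)/(M-1)) = 4*(k:ℝ)/(4*(n:ℝ)-1) := by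
                rw [hMm1]; ring
              rw [this]; linarith [hδ2]
      calc M^(2*k) = (M/(M-1))^(2*k) * (M-1)^(2*k) := by
            rw [div_pow]; field_simp
        _ ≤ (1 + δ/2) * (M-1)^(2*k) := by
            apply mul_le_mul_of_nonneg_right hr (by positivity)
    have hmid : (M*(M-2))^(n-k-k) ≤ ((M-1)^2)^(n-k-k) := by
      apply pow_le_pow_left₀ (mul_nonneg (by linarith) (by linarith))
      have hq : (M-1)^2 = M*(M-2) + 1 := by ring
      linarith
    have hnsplit : n = 2*k + (n-k-k) := by omega
    calc M^n * (M-2)^(n-k-k) = M^(2*k) * ((M*(M-2))^(n-k-k)) := by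
          rw [mul_pow]
          calc M^n * (M-2)^(n-k-k) = M^(2*k + (n-k-k)) * (M-2)^(n-k-k) := by rw [← hnsplit]
            _ = M^(2*k) * (M^(n-k-k) * (M-2)^(n-k-k)) := by rw [pow_add]; ring
      _ ≤ ((1 + δ/2) * (M-1)^(2*k)) * ((M-1)^2)^(n-k-k) := by
          refine mul_le_mul hrat hmid ?_ ?_
          · positivity
          · have h0 : (0:ℝ) ≤ 1 + δ/2 := by linarith
            positivity
      _ = (1 + δ/2) * ((M-1)^(n-k))^2 := by
          have h1 : ((M-1)^2)^(n-k-k) = (M-1)^(2*(n-k-k)) := by rw [← pow_mul]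
          have h2 : ((M-1)^(n-k))^2 = (M-1)^((n-k)*2) := by rw [← pow_mul]
          have h3 : 2*k + 2*(n-k-k) = (n-k)*2 := by omega
          rw [h1, h2, mul_assoc, ← pow_add, h3]
  -- Chebyshev assembly
  have hcs := supp_card_bound (E := E) (n := n) k
  have hs1 := sum_Xk (E := E) (n := n) k
  have hs2 := sum_Xk_sq (E := E) (n := n) k
  set sc := ((univ : Finset (Fin n → E)).filter fun ω => ∃ e, fibc ω e = k).card with hscdef
  rw [hs1, hs2] at hcs
  have hcsR : ((m * (n.choose k * (m-1)^(n-k)) : ℕ):ℝ)^2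
      ≤ (sc:ℝ) * ((m * (n.choose k * (m-1)^(n-k))
          + (m*(m-1)) * (n.choose k * ((n-k).choose k) * (m-2)^(n-k-k)) : ℕ):ℝ) := by
    exact_mod_cast hcs
  have hcast1 : ((m * (n.choose k * (m-1)^(n-k)) : ℕ):ℝ) = M * P := by
    push_cast [c1]
    try rw [hPdef, hChdef]
    try ring
  have hcast2 : ((m * (n.choose k * (m-1)^(n-k))
      + (m*(m-1)) * (n.choose k * ((n-k).choose k) * (m-2)^(n-k-k)) : ℕ):ℝ)
      = M * P + (M*(M-1)) * Q := by
    push_cast [c1, c2]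
    try rw [hPdef, hQdef, hChdef, hCh2def]
    try ring
  rw [hcast1, hcast2] at hcsR
  -- key: (1-δ) * M^n * (M*P + M*(M-1)*Q) ≤ (M*P)^2
  have hkey : (1-δ) * M^n * (M*P + (M*(M-1))*Q) ≤ (M*P)^2 := by
    have hMn : (0:ℝ) ≤ M^n := by positivity
    have hterm1 : M^n * (M*P) ≤ (δ/4) * (M*P)^2 := by
      calc M^n * (M*P) ≤ ((δ/4) * (M*P)) * (M*P) :=
            mul_le_mul_of_nonneg_right ha (by positivity)
        _ = (δ/4) * (M*P)^2 := by ring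
    have hterm2 : M^n * ((M*(M-1))*Q) ≤ (1 + δ/2) * (M*P)^2 := by
      have expand : M^n * (M^2*Q) = (M^2 * (Ch * Ch2)) * (M^n * (M-2)^(n-k-k)) := by
        rw [hQdef]; ring
      have expand2 : (M*P)^2 = (M^2 * (Ch * Ch)) * ((M-1)^(n-k))^2 := by
        rw [hPdef]; ring
      calc M^n * ((M*(M-1))*Q) ≤ M^n * (M^2*Q) := by
            apply mul_le_mul_of_nonneg_left _ hMn
            apply mul_le_mul_of_nonneg_right _ hQnn
            have hq : M^2 = M*(M-1) + M := by ring
            linarith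
        _ = (M^2 * (Ch * Ch2)) * (M^n * (M-2)^(n-k-k)) := expand
        _ ≤ (M^2 * (Ch * Ch)) * (M^n * (M-2)^(n-k-k)) := by
            apply mul_le_mul_of_nonneg_right _ (by positivity)
            apply mul_le_mul_of_nonneg_left _ (by positivity)
            exact mul_le_mul_of_nonneg_left hCh2le (le_of_lt hChpos)
        _ ≤ (M^2 * (Ch * Ch)) * ((1 + δ/2) * ((M-1)^(n-k))^2) := by
            apply mul_le_mul_of_nonneg_left hb (by positivity)
        _ = (1 + δ/2) * ((M^2 * (Ch * Ch)) * ((M-1)^(n-k))^2) := by ring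
        _ = (1 + δ/2) * (M*P)^2 := by rw [← expand2]
    have hsum : (1-δ) * M^n * (M*P + (M*(M-1))*Q)
        = (1-δ) * (M^n * (M*P)) + (1-δ) * (M^n * ((M*(M-1))*Q)) := by ring
    have hd1 : 0 ≤ 1 - δ := by linarith
    have hnn1 : 0 ≤ M^n * (M*P) := by positivity
    have hnn2 : 0 ≤ M^n * ((M*(M-1))*Q) := by positivity
    have hsq : 0 ≤ (M*P)^2 := by positivity
    calc (1-δ) * M^n * (M*P + (M*(M-1))*Q)
        = (1-δ) * (M^n * (M*P)) + (1-δ) * (M^n * ((M*(M-1))*Q)) := hsum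
      _ ≤ 1 * ((δ/4) * (M*P)^2) + (1-δ) * ((1 + δ/2) * (M*P)^2) := by
          apply add_le_add
          · calc (1-δ) * (M^n * (M*P)) ≤ 1 * (M^n * (M*P)) :=
                  mul_le_mul_of_nonneg_right (by linarith) hnn1
              _ ≤ 1 * ((δ/4) * (M*P)^2) := by rw [one_mul, one_mul]; exact hterm1
          · exact mul_le_mul_of_nonneg_left hterm2 hd1
      _ ≤ (M*P)^2 := by
          have hc : 1 * ((δ/4) * (M*P)^2) + (1-δ) * ((1 + δ/2) * (M*P)^2)
              = (M*P)^2 - (δ/4)*(M*P)^2 - (δ*δ/2)*(M*P)^2 := by ring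
          have hx1 : 0 ≤ (δ/4)*(M*P)^2 := mul_nonneg (by linarith) hsq
          have hx2 : 0 ≤ (δ*δ/2)*(M*P)^2 :=
            mul_nonneg (by positivity) hsq
          linarith
  -- conclude
  have hS2pos : (0:ℝ) < M * P + (M*(M-1))*Q := by
    have hMP : (0:ℝ) < M * P := mul_pos (by linarith) hPpos
    have hrest : (0:ℝ) ≤ (M*(M-1))*Q :=
      mul_nonneg (mul_nonneg (by linarith) (by linarith)) hQnn
    linarith
  have final : (1-δ) * M^n ≤ (sc:ℝ) := by
    have h := le_trans hkey hcsR
    have h2 : (1-δ) * M^n * (M*P + (M*(M-1))*Q) ≤ (sc:ℝ) * (M*P + (M*(M-1))*Q) := by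
      calc (1-δ) * M^n * (M*P + (M*(M-1))*Q) ≤ (M*P)^2 := hkey
        _ ≤ (sc:ℝ) * (M*P + (M*(M-1))*Q) := hcsR
    exact le_of_mul_le_mul_right h2 hS2pos
  exact final

open Real in
lemma core_count {n : ℕ} {E : Type} [Fintype E] [DecidableEq E]
    (Amax : (Fin n → E) → ℕ)
    (hmE : Fintype.card E = 4 * n)
    (hmax : ∀ (ω : Fin n → E) (e : E) (k : ℕ), fibc ω e = k → k ≤ 2 * Amax ω)
    (hn16 : 16 ≤ n) (hnN : Real.exp (Real.exp 124) ≤ (n:ℝ)) :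
    ((Nat.card {ω : Fin n → E //
        (1/16:ℝ) * (Real.log n / Real.log (Real.log n)) ≤ (Amax ω : ℝ)} : ℕ) : ℝ)
      ≥ (1 - (n : ℝ) ^ (-(1/16:ℝ))) * ((Nat.card (Fin n → E) : ℕ) : ℝ) := by
  classical
  have hnpos : (0:ℝ) < (n:ℝ) := by
    have : 0 < n := by omega
    exact_mod_cast this
  set t := Real.log n with htdef
  set u := Real.log t with hudef
  have ht : Real.exp 124 ≤ t := by
    have h := Real.log_le_log (Real.exp_pos _) hnN
    rwa [Real.log_exp] at h
  have ht0 : (0:ℝ) < t := lt_of_lt_of_le (Real.exp_pos _) ht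
  have hu : (124:ℝ) ≤ u := by
    have h := Real.log_le_log (Real.exp_pos 124) ht
    rwa [Real.log_exp] at h
  have hu0 : (0:ℝ) < u := by linarith
  have hexpu : Real.exp u = t := Real.exp_log ht0
  have hexpt : Real.exp t = n := Real.exp_log hnpos
  have hsq : ∀ x : ℝ, 0 ≤ x → (1 + x/2)^2 ≤ Real.exp x := by
    intro x hx
    have h1 : 1 + x/2 ≤ Real.exp (x/2) := by
      have := Real.add_one_le_exp (x/2); linarith
    calc (1+x/2)^2 ≤ (Real.exp (x/2))^2 := by
          apply pow_le_pow_left₀ (by linarith) h1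
      _ = Real.exp x := by
          rw [← Real.exp_nat_mul]
          congr 1
          push_cast
          ring
  have hsqu := hsq u (le_of_lt hu0)
  rw [hexpu] at hsqu
  have f1 : 32*u ≤ t := by nlinarith
  have hT : (3969:ℝ) ≤ t := by nlinarith
  have hhalfpow : (n:ℝ)^(1/2:ℝ) = Real.exp (t/2) := by
    rw [Real.rpow_def_of_pos hnpos]
    congr 1
    rw [← htdef]; ring
  have hsqrtn : t ≤ 2*(n:ℝ)^(1/2:ℝ) := by
    rw [hhalfpow]
    have h := Real.add_one_le_exp (t/2)
    linarith
  have h4sq : 4*(n:ℝ)^(1/2:ℝ) ≤ (n:ℝ) := by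
    have hs : (n:ℝ)^(1/2:ℝ) * (n:ℝ)^(1/2:ℝ) = (n:ℝ) := by
      rw [← Real.rpow_add hnpos]; norm_num
    have h4 : (4:ℝ) ≤ (n:ℝ)^(1/2:ℝ) := by
      rw [hhalfpow]
      have := Real.add_one_le_exp (t/2)
      linarith
    nlinarith [Real.rpow_nonneg (le_of_lt hnpos) (1/2:ℝ)]
  set k := ⌊t/(4*u)⌋₊ with hkdef
  have hkub : (k:ℝ) ≤ t/(4*u) := Nat.floor_le (by positivity)
  have hklb : t/(4*u) < (k:ℝ) + 1 := Nat.lt_floor_add_one _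
  have hk8 : (8:ℝ) ≤ t/(4*u) := by
    rw [le_div_iff₀ (by positivity)]; linarith
  have hk1 : 1 ≤ k := by
    have h1 : (1:ℝ) ≤ (k:ℝ) := by linarith
    exact_mod_cast h1
  have hkt : (k:ℝ) ≤ t := by
    refine le_trans hkub ?_
    rw [div_le_iff₀ (by positivity)]
    nlinarith
  have hk2 : 2*k ≤ n := by
    have h1 : 2*(k:ℝ) ≤ (n:ℝ) := by linarith
    exact_mod_cast h1
  have h8k : (8*(k:ℝ))^k ≤ (n:ℝ)^(1/2:ℝ) := by
    have he2u : Real.exp (2*u) = t^2 := by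
      rw [two_mul, Real.exp_add, hexpu]; ring
    have h8k' : (8*(k:ℝ)) ≤ Real.exp (2*u) := by
      rw [he2u]; nlinarith
    rw [hhalfpow]
    calc (8*(k:ℝ))^k ≤ (Real.exp (2*u))^k := by
          apply pow_le_pow_left₀ (by positivity) h8k'
      _ = Real.exp (k*(2*u)) := by rw [← Real.exp_nat_mul]
      _ ≤ Real.exp (t/2) := by
          apply Real.exp_le_exp.mpr
          calc (k:ℝ)*(2*u) ≤ (t/(4*u))*(2*u) :=
                mul_le_mul_of_nonneg_right hkub (by positivity)
            _ = t/2 := by field_simp; ring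
  have hδn : 2*(8*(k:ℝ))^k ≤ (n:ℝ)^(-(1/16:ℝ)) * n := by
    have hr : (n:ℝ)^(-(1/16:ℝ)) * (n:ℝ) = Real.exp (15*t/16) := by
      rw [Real.rpow_def_of_pos hnpos, ← hexpt, ← Real.exp_add, Real.log_exp]
      congr 1
      ring
    rw [hr]
    have h2 : 2*(8*(k:ℝ))^k ≤ 2*Real.exp (t/2) := by
      rw [hhalfpow] at h8k; linarith
    have h3 : 2*Real.exp (t/2) ≤ Real.exp (15*t/16) := by
      have hsplit : Real.exp (15*t/16) = Real.exp (7*t/16) * Real.exp (t/2) := by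
        rw [← Real.exp_add]; congr 1; ring
      rw [hsplit]
      have h4 : (2:ℝ) ≤ Real.exp (7*t/16) := by
        have := Real.add_one_le_exp (7*t/16); linarith
      nlinarith [Real.exp_pos (t/2)]
    linarith
  have hδ2 : 4*(k:ℝ)/(4*(n:ℝ)-1) ≤ (n:ℝ)^(-(1/16:ℝ))/2 := by
    have hd : (n:ℝ)^(-(1/16:ℝ)) = Real.exp (-t/16) := by
      rw [Real.rpow_def_of_pos hnpos]
      congr 1
      rw [← htdef]; ring
    have h3n : (0:ℝ) < 3*(n:ℝ) := by positivity
    have hnbig : (16:ℝ) ≤ (n:ℝ) := by exact_mod_cast hn16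
    have hb1 : 4*(k:ℝ)/(4*(n:ℝ)-1) ≤ 4*t/(3*(n:ℝ)) := by
      apply div_le_div₀ (by positivity) (by linarith) h3n (by linarith)
    have hb2 : 4*t/(3*(n:ℝ)) ≤ Real.exp (-t/16)/2 := by
      rw [div_le_div_iff₀ h3n (by norm_num)]
      have he : Real.exp (-t/16) * (3*(n:ℝ)) = 3*Real.exp (15*t/16) := by
        rw [← hexpt,
          show Real.exp (-t/16) * (3*Real.exp t) = 3*(Real.exp (-t/16) * Real.exp t) from by
            ring,
          ← Real.exp_add]
        congr 2
        ring
      rw [he]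
      have h5 := hsq (t/2) (by linarith)
      have h6 : Real.exp (t/2) ≤ Real.exp (15*t/16) :=
        Real.exp_le_exp.mpr (by linarith)
      nlinarith
    rw [hd]
    linarith
  have hhalf : 2*(k:ℝ)/(4*(n:ℝ)-1) ≤ 1/2 := by
    have hnbig : (16:ℝ) ≤ (n:ℝ) := by exact_mod_cast hn16
    have hpos : (0:ℝ) < 4*(n:ℝ)-1 := by linarith
    rw [div_le_iff₀ hpos]
    linarith
  have hcount := main_count (E := E) hmE hn16 hk1 hk2 hδn hδ2 hhalf
  -- inclusion into the target event
  have hincl : ((Finset.univ : Finset (Fin n → E)).filter fun ω => ∃ e, fibc ω e = k)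
      ⊆ (Finset.univ.filter fun ω : Fin n → E =>
          (1/16:ℝ)*(t/u) ≤ ((Amax ω : ℕ):ℝ)) := by
    intro ω hω
    obtain ⟨e, he⟩ := (Finset.mem_filter.mp hω).2
    have hload : k ≤ 2*Amax ω := hmax ω e k he
    refine Finset.mem_filter.mpr ⟨Finset.mem_univ _, ?_⟩
    have h1 : (k:ℝ) ≤ 2*((Amax ω : ℕ):ℝ) := by exact_mod_cast hload
    have h2 : t/(8*u) ≤ (k:ℝ) := by
      have e2 : (1:ℝ) ≤ t/(8*u) := by
        rw [le_div_iff₀ (by positivity)]; linarith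
      have e1 : t/(4*u) = 2*(t/(8*u)) := by ring
      linarith
    have h3 : (1/16:ℝ)*(t/u) = (t/(8*u))/2 := by ring
    rw [h3]
    linarith
  -- Nat.card conversions
  have hΩ : ((Nat.card (Fin n → E) : ℕ) : ℝ) = ((Fintype.card E : ℕ):ℝ)^n := by
    rw [Nat.card_fun, Nat.card_eq_fintype_card (α := E),
      Nat.card_eq_fintype_card (α := Fin n), Fintype.card_fin]
    push_cast; ring
  have hL : ((Nat.card {ω : Fin n → E // (1/16:ℝ)*(t/u) ≤ ((Amax ω : ℕ):ℝ)} : ℕ) : ℝ)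
      = (((Finset.univ : Finset (Fin n → E)).filter fun ω =>
          (1/16:ℝ)*(t/u) ≤ ((Amax ω : ℕ):ℝ)).card : ℝ) := by
    rw [Nat.card_eq_fintype_card, Fintype.card_subtype]
  rw [ge_iff_le, hΩ, hL]
  calc (1 - (n:ℝ)^(-(1/16:ℝ))) * ((Fintype.card E : ℕ):ℝ)^n
      ≤ (((Finset.univ : Finset (Fin n → E)).filter fun ω => ∃ e, fibc ω e = k).card : ℝ) :=
        hcount
    _ ≤ (((Finset.univ : Finset (Fin n → E)).filter fun ω =>
          (1/16:ℝ)*(t/u) ≤ ((Amax ω : ℕ):ℝ)).card : ℝ) := by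
        exact_mod_cast Finset.card_le_card hincl

/-- Final load of bin `v` under allocation `alloc` of `n` balls into `n` bins. -/
def load {n : ℕ} (alloc : Fin n → Fin n) (v : Fin n) : ℕ :=
  (Finset.univ.filter fun b => alloc b = v).card

/-- Maximum bin load. -/
def maxLoad {n : ℕ} (alloc : Fin n → Fin n) : ℕ :=
  Finset.univ.sup (load alloc)

/-- Load of bin `v` just before ball `b` is placed (sequential placement). -/
def loadBefore {n : ℕ} (alloc : Fin n → Fin n) (b : Fin n) (v : Fin n) : ℕ :=
  (Finset.univ.filter fun b' => b' < b ∧ alloc b' = v).card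

/-- Sequential greedy edge-sampling allocation: each ball's outcome is a uniformly
random (oriented) edge of `G`; the ball is placed in the lesser-loaded endpoint,
ties broken arbitrarily. -/
def GreedyEdgeChoice {n : ℕ} (G : SimpleGraph (Fin n))
    (A : (Fin n → {p : Fin n × Fin n // G.Adj p.1 p.2}) → Fin n → Fin n) : Prop :=
  ∀ ω b, (A ω b = (ω b : Fin n × Fin n).1 ∨ A ω b = (ω b : Fin n × Fin n).2) ∧
    ∀ v, (v = (ω b : Fin n × Fin n).1 ∨ v = (ω b : Fin n × Fin n).2) →
      loadBefore (A ω) b (A ω b) ≤ loadBefore (A ω) b v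

lemma maxload_ge {n : ℕ} {G : SimpleGraph (Fin n)}
    {A : (Fin n → {p : Fin n × Fin n // G.Adj p.1 p.2}) → Fin n → Fin n}
    [DecidableEq {p : Fin n × Fin n // G.Adj p.1 p.2}]
    (hA : GreedyEdgeChoice G A) (ω : Fin n → {p : Fin n × Fin n // G.Adj p.1 p.2})
    (e : {p : Fin n × Fin n // G.Adj p.1 p.2}) :
    fibc ω e ≤ 2 * maxLoad (A ω) := by
  have hsub : (Finset.univ.filter fun b => ω b = e)
      ⊆ (Finset.univ.filter fun b => A ω b = (e : Fin n × Fin n).1)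
        ∪ (Finset.univ.filter fun b => A ω b = (e : Fin n × Fin n).2) := by
    intro b hb
    have hb' : ω b = e := (Finset.mem_filter.mp hb).2
    rcases (hA ω b).1 with h | h
    · exact Finset.mem_union_left _ (Finset.mem_filter.mpr ⟨Finset.mem_univ _, by rw [h, hb']⟩)
    · exact Finset.mem_union_right _ (Finset.mem_filter.mpr ⟨Finset.mem_univ _, by rw [h, hb']⟩)
  have h1 : load (A ω) (e : Fin n × Fin n).1 ≤ maxLoad (A ω) :=
    Finset.le_sup (Finset.mem_univ _)
  have h2 : load (A ω) (e : Fin n × Fin n).2 ≤ maxLoad (A ω) :=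
    Finset.le_sup (Finset.mem_univ _)
  calc fibc ω e ≤ _ := Finset.card_le_card hsub
    _ ≤ _ + _ := Finset.card_union_le _ _
    _ ≤ maxLoad (A ω) + maxLoad (A ω) := add_le_add h1 h2
    _ = 2 * maxLoad (A ω) := (two_mul _).symm

open Real in
/-- On a `4`-regular graph with `n` vertices, edge-sampling greedy placement of `n`
balls yields maximum load at least `Ω(log n / log log n)` with high probability
`1 − n^{−Ω(1)}`: no power-of-two-choices improvement over single choice. -/
theorem edge_sampling_four_regular_lower_bound :
    ∃ c > (0:ℝ), ∃ N : ℕ, ∀ n ≥ N,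
      ∀ G : SimpleGraph (Fin n), (∀ v : Fin n, Nat.card {w // G.Adj v w} = 4) →
      ∀ A : (Fin n → {p : Fin n × Fin n // G.Adj p.1 p.2}) → Fin n → Fin n,
        GreedyEdgeChoice G A →
        ((Nat.card {ω : Fin n → {p : Fin n × Fin n // G.Adj p.1 p.2} //
            c * (log n / log (log n)) ≤ (maxLoad (A ω) : ℝ)} : ℝ)
          ≥ (1 - (n : ℝ) ^ (-c)) *
            (Nat.card (Fin n → {p : Fin n × Fin n // G.Adj p.1 p.2}) : ℝ)) := by
  refine ⟨1/16, by norm_num, max 16 ⌈Real.exp (Real.exp 124)⌉₊, ?_⟩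
  intro n hn G hG A hA
  classical
  letI : Fintype {p : Fin n × Fin n // G.Adj p.1 p.2} := Fintype.ofFinite _
  letI : ∀ v : Fin n, Fintype {w // G.Adj v w} := fun _ => Fintype.ofFinite _
  have hn16 : 16 ≤ n := le_trans (le_max_left _ _) hn
  have hnN : Real.exp (Real.exp 124) ≤ (n:ℝ) := by
    have h1 : ⌈Real.exp (Real.exp 124)⌉₊ ≤ n := le_trans (le_max_right _ _) hn
    exact le_trans (Nat.le_ceil _) (by exact_mod_cast h1)
  have hmE : Fintype.card {p : Fin n × Fin n // G.Adj p.1 p.2} = 4 * n := by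
    have e1 : {p : Fin n × Fin n // G.Adj p.1 p.2} ≃ Σ v : Fin n, {w // G.Adj v w} :=
      { toFun := fun p => ⟨p.1.1, ⟨p.1.2, p.2⟩⟩
        invFun := fun q => ⟨(q.1, q.2.1), q.2.2⟩
        left_inv := fun p => Subtype.ext (Prod.mk.eta)
        right_inv := fun q => rfl }
    rw [Fintype.card_congr e1, Fintype.card_sigma]
    have hc : ∀ v : Fin n, Fintype.card {w // G.Adj v w} = 4 := fun v => by
      rw [← Nat.card_eq_fintype_card]; exact hG v
    simp only [hc, Finset.sum_const, Finset.card_univ, Fintype.card_fin, smul_eq_mul]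
    omega
  have hmax : ∀ (ω : Fin n → {p : Fin n × Fin n // G.Adj p.1 p.2})
      (e : {p : Fin n × Fin n // G.Adj p.1 p.2}) (k : ℕ),
      fibc ω e = k → k ≤ 2 * maxLoad (A ω) :=
    fun ω e k he => he ▸ maxload_ge hA ω e
  exact core_count (fun ω => maxLoad (A ω)) hmE hmax hn16 hnN
end

section
/- Suppose m = n balls are thrown into N = O(n) bins, each ball independently choosing a bin according to an arbitrary probability distribution p over the bins, and suppose each bin is labeled by an unordered pair of servers from an n-element server set, each ball being assigned to the lesser-loaded server of its bin's pair. Then the expected maximum server load is at least (1/2)·Ω(log n / log log n). -/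
open Finset Filter

namespace BP

variable {n N : ℕ}

/-- Weight (probability) of an outcome. -/
def W (p : Fin N → ℝ) (ω : Fin n → Fin N) : ℝ := ∏ b, p (ω b)

/-- Number of balls in bin `j`. -/
def cnt (j : Fin N) (ω : Fin n → Fin N) : ℕ := (univ.filter fun b => ω b = j).card

variable {p : Fin N → ℝ}

lemma W_nonneg (hp0 : ∀ j, 0 ≤ p j) (ω : Fin n → Fin N) : 0 ≤ W p ω :=
  Finset.prod_nonneg fun _ _ => hp0 _

/-- Master independence identity. -/
lemma expect_prod (g : Fin n → Fin N → ℝ) :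
    ∑ ω : Fin n → Fin N, W p ω * ∏ b, g b (ω b) = ∏ b, ∑ i, p i * g b i := by
  rw [Fintype.prod_sum (f := fun b i => p i * g b i)]
  refine Finset.sum_congr rfl fun ω _ => ?_
  rw [W, ← Finset.prod_mul_distrib]

/-- the indicator of `cnt j ω = t` as a sum over t-subsets -/
lemma indicator_cnt (j : Fin N) (t : ℕ) (ω : Fin n → Fin N) :
    (if cnt j ω = t then (1:ℝ) else 0) =
      ∑ T ∈ powersetCard t (univ : Finset (Fin n)),
        ∏ b, (if b ∈ T then (if ω b = j then (1:ℝ) else 0) else (if ω b = j then 0 else 1)) := by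
  classical
  set F : Finset (Fin n) := univ.filter (fun b => ω b = j) with hF
  have key : ∀ T : Finset (Fin n),
      (∏ b, (if b ∈ T then (if ω b = j then (1:ℝ) else 0) else (if ω b = j then 0 else 1)))
        = if T = F then 1 else 0 := by
    intro T
    by_cases hTF : T = F
    · subst hTF
      rw [if_pos rfl]
      refine Finset.prod_eq_one fun b _ => ?_
      by_cases hb : ω b = j <;> simp [hF, hb]
    · rw [if_neg hTF]
      have : ∃ b, (b ∈ T ∧ ω b ≠ j) ∨ (b ∉ T ∧ ω b = j) := by
        by_contra hcon
        push_neg at hcon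
        apply hTF
        ext b
        have := hcon b
        by_cases hb : ω b = j <;> simp [hF, hb] <;> tauto
      obtain ⟨b, hb⟩ := this
      refine Finset.prod_eq_zero (Finset.mem_univ b) ?_
      rcases hb with ⟨h1, h2⟩ | ⟨h1, h2⟩ <;> simp [h1, h2]
  rw [Finset.sum_congr rfl (fun T _ => key T)]
  rw [Finset.sum_ite_eq' (powersetCard t univ) F (fun _ => (1:ℝ))]
  have : F ∈ powersetCard t (univ : Finset (Fin n)) ↔ cnt j ω = t := by
    simp [Finset.mem_powersetCard, cnt, hF]
  by_cases h : cnt j ω = t <;> simp [this, h]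

/-- Binomial formula. -/
lemma prob_cnt_eq (hp1 : ∑ j, p j = 1) (j : Fin N) (t : ℕ) :
    ∑ ω ∈ univ.filter (fun ω : Fin n → Fin N => cnt j ω = t), W p ω
      = (n.choose t : ℝ) * p j ^ t * (1 - p j) ^ (n - t) := by
  classical
  rw [Finset.sum_filter]
  have step1 : ∀ ω : Fin n → Fin N, (if cnt j ω = t then W p ω else 0)
      = W p ω * (if cnt j ω = t then (1:ℝ) else 0) := by
    intro ω; by_cases h : cnt j ω = t <;> simp [h]
  rw [Finset.sum_congr rfl fun ω _ => step1 ω]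
  have step2 : ∀ ω : Fin n → Fin N, W p ω * (if cnt j ω = t then (1:ℝ) else 0)
      = ∑ T ∈ powersetCard t (univ : Finset (Fin n)),
          W p ω * ∏ b, (if b ∈ T then (if ω b = j then (1:ℝ) else 0) else (if ω b = j then 0 else 1)) := by
    intro ω
    rw [indicator_cnt j t ω, Finset.mul_sum]
  rw [Finset.sum_congr rfl fun ω _ => step2 ω, Finset.sum_comm]
  have step3 : ∀ T ∈ powersetCard t (univ : Finset (Fin n)),
      (∑ ω : Fin n → Fin N, W p ω *
        ∏ b, (if b ∈ T then (if ω b = j then (1:ℝ) else 0) else (if ω b = j then 0 else 1)))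
        = p j ^ t * (1 - p j) ^ (n - t) := by
    intro T hT
    rw [Finset.mem_powersetCard] at hT
    rw [expect_prod (g := fun b i => if b ∈ T then (if i = j then (1:ℝ) else 0)
      else (if i = j then 0 else 1))]
    have perb : ∀ b : Fin n,
        (∑ i, p i * (if b ∈ T then (if i = j then (1:ℝ) else 0) else (if i = j then 0 else 1)))
          = if b ∈ T then p j else 1 - p j := by
      intro b
      by_cases hb : b ∈ T
      · simp only [if_pos hb, mul_ite, mul_one, mul_zero]
        rw [Finset.sum_ite_eq' univ j p]
        simp
      · simp only [if_neg hb, mul_ite, mul_one, mul_zero]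
        rw [Finset.sum_ite, Finset.sum_const, ← hp1]
        have : univ.filter (fun i : Fin N => ¬ i = j) = univ.erase j := by
          ext i; simp [Finset.mem_erase]
        rw [this, Finset.sum_erase_eq_sub (Finset.mem_univ j)]
        simp
    rw [Finset.prod_congr rfl fun b _ => perb b, Finset.prod_ite]
    have h1 : univ.filter (fun b : Fin n => b ∈ T) = T := by
      ext b; simp
    have h2 : univ.filter (fun b : Fin n => ¬ b ∈ T) = univ \ T := by
      ext b; simp
    rw [h1, h2, Finset.prod_const, Finset.prod_const, Finset.card_sdiff_of_subset (Finset.subset_univ T)]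
    simp [hT.2]
  rw [Finset.sum_congr rfl step3, Finset.sum_const, Finset.card_powersetCard, Finset.card_univ,
    Fintype.card_fin, nsmul_eq_mul, mul_assoc]

/-- First moment: expected number of balls in bin `j` is `n * p j`. -/
lemma expect_cnt (hp1 : ∑ j, p j = 1) (j : Fin N) :
    ∑ ω : Fin n → Fin N, W p ω * (cnt j ω : ℝ) = n * p j := by
  classical
  have hc : ∀ ω : Fin n → Fin N, (cnt j ω : ℝ) = ∑ b, (if ω b = j then (1:ℝ) else 0) := by
    intro ω
    rw [cnt, Finset.card_filter, Nat.cast_sum]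
    simp
  have : ∑ ω : Fin n → Fin N, W p ω * (cnt j ω : ℝ)
      = ∑ b : Fin n, ∑ ω : Fin n → Fin N, W p ω * (if ω b = j then (1:ℝ) else 0) := by
    rw [Finset.sum_comm]
    exact Finset.sum_congr rfl fun ω _ => by rw [hc ω, Finset.mul_sum]
  rw [this]
  have single : ∀ b₀ : Fin n,
      ∑ ω : Fin n → Fin N, W p ω * (if ω b₀ = j then (1:ℝ) else 0) = p j := by
    intro b₀
    have keyg : ∀ ω : Fin n → Fin N,
        (if ω b₀ = j then (1:ℝ) else 0) =
        ∏ b, (fun b i => if b = b₀ then (if i = j then (1:ℝ) else 0) else 1) b (ω b) := by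
      intro ω
      rw [Finset.prod_eq_single b₀ (fun b _ hb => by simp [hb]) (by simp)]
      simp
    rw [Finset.sum_congr rfl fun ω _ => by rw [keyg ω]]
    rw [expect_prod (g := fun b i => if b = b₀ then (if i = j then (1:ℝ) else 0) else 1)]
    rw [Finset.prod_eq_single b₀ ?_ (by simp)]
    · simp
    · intro b _ hb
      simp [hb, hp1]
  rw [Finset.sum_congr rfl fun b _ => single b, Finset.sum_const, Finset.card_univ,
    Fintype.card_fin, nsmul_eq_mul]

/-- Pairwise upper bound. -/
lemma prob_pair_le (hp0 : ∀ j, 0 ≤ p j) (hp1 : ∑ j, p j = 1) {j j' : Fin N} (hjj' : j ≠ j')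
    (t : ℕ) :
    ∑ ω ∈ univ.filter (fun ω : Fin n → Fin N => cnt j ω = t ∧ cnt j' ω = t), W p ω
      ≤ (n.choose t : ℝ) ^ 2 * (p j ^ t * p j' ^ t * (1 - p j - p j') ^ (n - 2 * t)) := by
  classical
  set D : Finset (Finset (Fin n) × Finset (Fin n)) :=
    (powersetCard t (univ : Finset (Fin n)) ×ˢ powersetCard t (univ : Finset (Fin n))).filter
      (fun TT => Disjoint TT.1 TT.2) with hD
  set g : Finset (Fin n) × Finset (Fin n) → Fin n → Fin N → ℝ :=
    fun TT b i => if b ∈ TT.1 then (if i = j then 1 else 0)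
      else if b ∈ TT.2 then (if i = j' then 1 else 0)
      else (if i = j ∨ i = j' then 0 else 1) with hg
  have gnn : ∀ TT b i, 0 ≤ g TT b i := by
    intro TT b i
    simp only [hg]
    split_ifs <;> norm_num
  have hppos : 0 ≤ 1 - p j - p j' := by
    have : p j + p j' ≤ ∑ i, p i := by
      have := Finset.sum_le_sum_of_subset_of_nonneg
        (Finset.subset_univ {j, j'}) (fun i _ _ => hp0 i)
      rwa [Finset.sum_pair hjj'] at this
    rw [hp1] at this; linarith
  have pointwise : ∀ ω : Fin n → Fin N, (if cnt j ω = t ∧ cnt j' ω = t then (1:ℝ) else 0)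
      ≤ ∑ TT ∈ D, ∏ b, g TT b (ω b) := by
    intro ω
    by_cases hev : cnt j ω = t ∧ cnt j' ω = t
    · rw [if_pos hev]
      set T₀ : Finset (Fin n) := univ.filter (fun b => ω b = j) with hT₀
      set T₁ : Finset (Fin n) := univ.filter (fun b => ω b = j') with hT₁
      have hmem : (T₀, T₁) ∈ D := by
        rw [hD, Finset.mem_filter, Finset.mem_product]
        refine ⟨⟨?_, ?_⟩, ?_⟩
        · rw [Finset.mem_powersetCard]; exact ⟨Finset.subset_univ _, hev.1⟩
        · rw [Finset.mem_powersetCard]; exact ⟨Finset.subset_univ _, hev.2⟩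
        · rw [Finset.disjoint_filter]
          intro b _ hb hb'
          exact hjj' (hb ▸ hb'.symm ▸ rfl)
      have hone : ∏ b, g (T₀, T₁) b (ω b) = 1 := by
        refine Finset.prod_eq_one fun b _ => ?_
        simp only [hg, hT₀, hT₁, Finset.mem_filter, Finset.mem_univ, true_and]
        by_cases h0 : ω b = j
        · simp [h0, hjj']
        · by_cases h1 : ω b = j' <;> simp [h0, h1]
      calc (1:ℝ) = ∏ b, g (T₀, T₁) b (ω b) := hone.symm
        _ ≤ ∑ TT ∈ D, ∏ b, g TT b (ω b) :=
          Finset.single_le_sum (f := fun TT => ∏ b, g TT b (ω b))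
            (fun TT _ => Finset.prod_nonneg fun b _ => gnn TT b (ω b)) hmem
    · rw [if_neg hev]
      exact Finset.sum_nonneg fun TT _ => Finset.prod_nonneg fun b _ => gnn TT b (ω b)
  have step1 : ∑ ω ∈ univ.filter (fun ω : Fin n → Fin N => cnt j ω = t ∧ cnt j' ω = t), W p ω
      ≤ ∑ TT ∈ D, ∑ ω : Fin n → Fin N, W p ω * ∏ b, g TT b (ω b) := by
    rw [Finset.sum_filter, Finset.sum_comm]
    have : ∀ ω : Fin n → Fin N, (if cnt j ω = t ∧ cnt j' ω = t then W p ω else 0)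
        ≤ ∑ TT ∈ D, W p ω * ∏ b, g TT b (ω b) := by
      intro ω
      rw [← Finset.mul_sum]
      have h1 : (if cnt j ω = t ∧ cnt j' ω = t then W p ω else 0)
          = W p ω * (if cnt j ω = t ∧ cnt j' ω = t then (1:ℝ) else 0) := by
        by_cases h : cnt j ω = t ∧ cnt j' ω = t <;> simp [h]
      rw [h1]
      exact mul_le_mul_of_nonneg_left (pointwise ω) (Finset.prod_nonneg fun _ _ => hp0 _)
    exact Finset.sum_le_sum fun ω _ => this ω
  refine step1.trans ?_
  have term : ∀ TT ∈ D, ∑ ω : Fin n → Fin N, W p ω * ∏ b, g TT b (ω b)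
      = p j ^ t * p j' ^ t * (1 - p j - p j') ^ (n - 2 * t) := by
    intro TT hTT
    rw [hD, Finset.mem_filter, Finset.mem_product, Finset.mem_powersetCard,
      Finset.mem_powersetCard] at hTT
    obtain ⟨⟨⟨-, hc1⟩, -, hc2⟩, hdisj⟩ := hTT
    rw [expect_prod (g := g TT)]
    have perb : ∀ b : Fin n, (∑ i, p i * g TT b i)
        = if b ∈ TT.1 then p j else if b ∈ TT.2 then p j' else 1 - p j - p j' := by
      intro b
      by_cases hb1 : b ∈ TT.1
      · simp only [hg, if_pos hb1, mul_ite, mul_one, mul_zero]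
        rw [Finset.sum_ite_eq' univ j p]; simp [hb1]
      · by_cases hb2 : b ∈ TT.2
        · simp only [hg, if_neg hb1, if_pos hb2, mul_ite, mul_one, mul_zero]
          rw [Finset.sum_ite_eq' univ j' p]; simp [hb1, hb2]
        · simp only [hg, if_neg hb1, if_neg hb2, mul_ite, mul_one, mul_zero]
          rw [Finset.sum_ite, Finset.sum_const]
          have hset : univ.filter (fun i : Fin N => ¬ (i = j ∨ i = j')) = univ \ {j, j'} := by
            ext i; simp [not_or]
          rw [hset, Finset.sum_sdiff_eq_sub (Finset.subset_univ _), hp1,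
            Finset.sum_pair hjj']
          simp [sub_sub]
    rw [Finset.prod_congr rfl fun b _ => perb b]
    rw [Finset.prod_ite, Finset.prod_ite, Finset.prod_const, Finset.prod_const,
      Finset.prod_const]
    have e1 : univ.filter (fun b : Fin n => b ∈ TT.1) = TT.1 := by ext b; simp
    have e2 : (univ.filter (fun b : Fin n => ¬ b ∈ TT.1)).filter (fun b => b ∈ TT.2)
        = TT.2 := by
      ext b
      simp only [Finset.mem_filter, Finset.mem_univ, true_and]
      constructor
      · exact fun h => h.2
      · intro h
        exact ⟨fun hb1 => (Finset.disjoint_left.mp hdisj) hb1 h, h⟩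
    have e3 : ((univ.filter (fun b : Fin n => ¬ b ∈ TT.1)).filter (fun b => ¬ b ∈ TT.2)).card
        = n - 2 * t := by
      have : (univ.filter (fun b : Fin n => ¬ b ∈ TT.1)).filter (fun b => ¬ b ∈ TT.2)
          = univ \ (TT.1 ∪ TT.2) := by
        ext b; simp [not_or, and_comm]
      rw [this, Finset.card_sdiff_of_subset (Finset.subset_univ _), Finset.card_univ, Fintype.card_fin,
        Finset.card_union_of_disjoint hdisj, hc1, hc2, two_mul]
    rw [e1, e2, e3, hc1, hc2]; ring
  rw [Finset.sum_congr rfl term, Finset.sum_const, nsmul_eq_mul]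
  have hDcard : (D.card : ℝ) ≤ (n.choose t : ℝ) ^ 2 := by
    have : D.card ≤ (powersetCard t (univ : Finset (Fin n)) ×ˢ
        powersetCard t (univ : Finset (Fin n))).card := Finset.card_filter_le _ _
    rw [Finset.card_product, Finset.card_powersetCard, Finset.card_univ, Fintype.card_fin] at this
    calc (D.card : ℝ) ≤ ((n.choose t * n.choose t : ℕ) : ℝ) := by exact_mod_cast this
      _ = (n.choose t : ℝ) ^ 2 := by push_cast; ring
  exact mul_le_mul_of_nonneg_right hDcard
    (mul_nonneg (mul_nonneg (pow_nonneg (hp0 j) t) (pow_nonneg (hp0 j') t))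
      (pow_nonneg hppos _))

/-- Bonferroni inequality for the events `cnt j · = t`, `j ∈ S`. -/
lemma bonferroni (hp0 : ∀ j, 0 ≤ p j) (S : Finset (Fin N)) (t : ℕ) :
    (∑ j ∈ S, ∑ ω ∈ univ.filter (fun ω : Fin n → Fin N => cnt j ω = t), W p ω)
      - (1/2) * ∑ j ∈ S, ∑ j' ∈ S.erase j,
          ∑ ω ∈ univ.filter (fun ω : Fin n → Fin N => cnt j ω = t ∧ cnt j' ω = t), W p ω
      ≤ ∑ ω ∈ univ.filter (fun ω : Fin n → Fin N => ∃ j ∈ S, cnt j ω = t), W p ω := by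
  classical
  have hWnn : ∀ ω : Fin n → Fin N, 0 ≤ W p ω := fun ω => Finset.prod_nonneg fun _ _ => hp0 _
  set k : (Fin n → Fin N) → ℕ := fun ω => (S.filter fun j => cnt j ω = t).card with hk
  have e1 : ∑ j ∈ S, ∑ ω ∈ univ.filter (fun ω : Fin n → Fin N => cnt j ω = t), W p ω
      = ∑ ω : Fin n → Fin N, (k ω : ℝ) * W p ω := by
    calc ∑ j ∈ S, ∑ ω ∈ univ.filter (fun ω : Fin n → Fin N => cnt j ω = t), W p ω
        = ∑ j ∈ S, ∑ ω : Fin n → Fin N, (if cnt j ω = t then W p ω else 0) := by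
          exact Finset.sum_congr rfl fun j _ => Finset.sum_filter _ _
      _ = ∑ ω : Fin n → Fin N, ∑ j ∈ S, (if cnt j ω = t then W p ω else 0) := Finset.sum_comm
      _ = ∑ ω : Fin n → Fin N, (k ω : ℝ) * W p ω := by
          refine Finset.sum_congr rfl fun ω _ => ?_
          rw [← Finset.sum_filter, Finset.sum_const, hk, nsmul_eq_mul]
  have e2 : ∑ j ∈ S, ∑ j' ∈ S.erase j,
        ∑ ω ∈ univ.filter (fun ω : Fin n → Fin N => cnt j ω = t ∧ cnt j' ω = t), W p ω
      = ∑ ω : Fin n → Fin N, ((k ω * (k ω - 1) : ℕ) : ℝ) * W p ω := by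
    have swap : ∀ j ∈ S, ∑ j' ∈ S.erase j,
        ∑ ω ∈ univ.filter (fun ω : Fin n → Fin N => cnt j ω = t ∧ cnt j' ω = t), W p ω
        = ∑ ω : Fin n → Fin N, ∑ j' ∈ S.erase j,
            (if cnt j ω = t ∧ cnt j' ω = t then W p ω else 0) := by
      intro j _
      rw [← Finset.sum_comm]
      exact Finset.sum_congr rfl fun j' _ => Finset.sum_filter _ _
    rw [Finset.sum_congr rfl swap, Finset.sum_comm]
    refine Finset.sum_congr rfl fun ω _ => ?_
    have inner : ∀ j ∈ S, ∑ j' ∈ S.erase j, (if cnt j ω = t ∧ cnt j' ω = t then W p ω else 0)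
        = if cnt j ω = t then ((k ω - 1 : ℕ) : ℝ) * W p ω else 0 := by
      intro j hj
      by_cases hPj : cnt j ω = t
      · rw [if_pos hPj]
        have : ∀ j' ∈ S.erase j, (if cnt j ω = t ∧ cnt j' ω = t then W p ω else 0)
            = if cnt j' ω = t then W p ω else 0 := by
          intro j' _
          by_cases h' : cnt j' ω = t <;> simp [h', hPj]
        rw [Finset.sum_congr rfl this, ← Finset.sum_filter]
        have : (S.erase j).filter (fun j' => cnt j' ω = t)
            = (S.filter fun j' => cnt j' ω = t).erase j := by
          ext i; simp [Finset.mem_erase, Finset.mem_filter]; tauto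
        rw [this, Finset.sum_const, Finset.card_erase_of_mem
          (Finset.mem_filter.mpr ⟨hj, hPj⟩), nsmul_eq_mul, hk]
      · rw [if_neg hPj]
        refine Finset.sum_eq_zero fun j' _ => ?_
        simp [hPj]
    rw [Finset.sum_congr rfl inner, ← Finset.sum_filter, Finset.sum_const, nsmul_eq_mul]
    have hobv : (S.filter fun a => cnt a ω = t).card = k ω := rfl
    rw [hobv, Nat.cast_mul]
    ring
  rw [e1, e2]
  have pointwise : ∀ ω : Fin n → Fin N,
      (k ω : ℝ) * W p ω - (1/2) * (((k ω * (k ω - 1) : ℕ) : ℝ) * W p ω)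
        ≤ (if ∃ j ∈ S, cnt j ω = t then W p ω else 0) := by
    intro ω
    by_cases hex : ∃ j ∈ S, cnt j ω = t
    · rw [if_pos hex]
      obtain ⟨j, hjS, hjt⟩ := hex
      have hm1 : 1 ≤ k ω := by
        rw [hk]
        exact Finset.card_pos.mpr ⟨j, Finset.mem_filter.mpr ⟨hjS, hjt⟩⟩
      have hcast : ((k ω * (k ω - 1) : ℕ) : ℝ) = (k ω : ℝ) * ((k ω : ℝ) - 1) := by
        rw [Nat.cast_mul, Nat.cast_sub hm1, Nat.cast_one]
      rw [hcast]
      have coeff : (k ω : ℝ) - (1/2) * ((k ω : ℝ) * ((k ω : ℝ) - 1)) ≤ 1 := by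
        rcases Nat.lt_or_ge (k ω) 2 with h | h
        · interval_cases h' : (k ω) <;> norm_num
        · have h2 : (2:ℝ) ≤ (k ω : ℝ) := by exact_mod_cast h
          nlinarith
      have := mul_le_mul_of_nonneg_right coeff (hWnn ω)
      nlinarith [hWnn ω]
    · rw [if_neg hex]
      have hk0 : k ω = 0 := by
        rw [hk, Finset.card_eq_zero, Finset.filter_eq_empty_iff]
        intro j hj hjt
        exact hex ⟨j, hj, hjt⟩
      simp [hk0]
  calc (∑ ω : Fin n → Fin N, (k ω : ℝ) * W p ω)
        - (1/2) * ∑ ω : Fin n → Fin N, ((k ω * (k ω - 1) : ℕ) : ℝ) * W p ω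
      = ∑ ω : Fin n → Fin N,
          ((k ω : ℝ) * W p ω - (1/2) * (((k ω * (k ω - 1) : ℕ) : ℝ) * W p ω)) := by
        rw [Finset.sum_sub_distrib, Finset.mul_sum]
    _ ≤ ∑ ω : Fin n → Fin N, (if ∃ j ∈ S, cnt j ω = t then W p ω else 0) :=
        Finset.sum_le_sum fun ω _ => pointwise ω
    _ = ∑ ω ∈ univ.filter (fun ω : Fin n → Fin N => ∃ j ∈ S, cnt j ω = t), W p ω :=
        (Finset.sum_filter _ _).symm

/-- subset with sum in [a, 2a] -/
lemma exists_subset_sum_between {ι : Type*} [DecidableEq ι] {a : ℝ} (s : Finset ι) (f : ι → ℝ)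
    (hub : ∀ i ∈ s, f i ≤ a) (ha : 0 < a)
    (htot : a ≤ ∑ i ∈ s, f i) :
    ∃ T ⊆ s, a ≤ ∑ i ∈ T, f i ∧ ∑ i ∈ T, f i ≤ 2 * a := by
  classical
  set 𝒮 : Finset (Finset ι) := s.powerset.filter (fun T => a ≤ ∑ i ∈ T, f i) with h𝒮
  have hne : 𝒮.Nonempty := ⟨s, by simp [h𝒮, htot]⟩
  obtain ⟨T, hT𝒮, hTmin⟩ := Finset.exists_min_image 𝒮 Finset.card hne
  rw [h𝒮, Finset.mem_filter, Finset.mem_powerset] at hT𝒮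
  obtain ⟨hTs, hTa⟩ := hT𝒮
  have hTne : T.Nonempty := by
    rcases Finset.eq_empty_or_nonempty T with rfl | h
    · simp at hTa; linarith
    · exact h
  obtain ⟨x, hx⟩ := hTne
  have herase : ∑ i ∈ T.erase x, f i < a := by
    by_contra hcon
    push_neg at hcon
    have hm : T.erase x ∈ 𝒮 := by
      rw [h𝒮, Finset.mem_filter, Finset.mem_powerset]
      exact ⟨(Finset.erase_subset x T).trans hTs, hcon⟩
    have := hTmin _ hm
    have hlt := Finset.card_erase_lt_of_mem hx
    omega
  refine ⟨T, hTs, hTa, ?_⟩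
  have := Finset.add_sum_erase T f hx
  have hfx : f x ≤ a := hub x (hTs hx)
  linarith [this]

/-- a bin's count is at most twice the max load -/
lemma cnt_le_two_maxLoad (label : Fin N → Fin n × Fin n) (alloc : Fin n → Fin n)
    (ω : Fin n → Fin N)
    (hA : ∀ b, alloc b = (label (ω b)).1 ∨ alloc b = (label (ω b)).2) (j : Fin N) :
    cnt j ω ≤ 2 * maxLoad alloc := by
  classical
  set F : Finset (Fin n) := univ.filter (fun b => ω b = j) with hF
  have hsplit : F ⊆ (F.filter fun b => alloc b = (label j).1) ∪
      (F.filter fun b => alloc b = (label j).2) := by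
    intro b hb
    have hbj : ω b = j := (Finset.mem_filter.mp hb).2
    rcases hA b with h | h
    · exact Finset.mem_union_left _ (Finset.mem_filter.mpr ⟨hb, by rw [h, hbj]⟩)
    · exact Finset.mem_union_right _ (Finset.mem_filter.mpr ⟨hb, by rw [h, hbj]⟩)
  have hload : ∀ v : Fin n, (F.filter fun b => alloc b = v).card ≤ maxLoad alloc := by
    intro v
    refine le_trans ?_ (Finset.le_sup (Finset.mem_univ v))
    refine Finset.card_le_card ?_
    intro b hb
    rw [Finset.mem_filter] at hb ⊢
    exact ⟨Finset.mem_univ b, hb.2⟩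
  calc cnt j ω = F.card := rfl
    _ ≤ ((F.filter fun b => alloc b = (label j).1) ∪
          (F.filter fun b => alloc b = (label j).2)).card := Finset.card_le_card hsplit
    _ ≤ (F.filter fun b => alloc b = (label j).1).card
          + (F.filter fun b => alloc b = (label j).2).card := Finset.card_union_le _ _
    _ ≤ maxLoad alloc + maxLoad alloc := add_le_add (hload _) (hload _)
    _ = 2 * maxLoad alloc := (two_mul _).symm

/-- 1 - x ≥ exp (-2x) for 0 ≤ x ≤ 1/2 -/
lemma exp_neg_two_le_one_sub {x : ℝ} (h0 : 0 ≤ x) (h1 : x ≤ 1/2) :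
    Real.exp (-(2*x)) ≤ 1 - x := by
  have h2 : 1 + 2*x ≤ Real.exp (2*x) := by
    have := Real.add_one_le_exp (2*x); linarith
  have hpos : (0:ℝ) < 1 + 2*x := by linarith
  rw [Real.exp_neg]
  have step1 : (Real.exp (2*x))⁻¹ ≤ (1 + 2*x)⁻¹ := inv_anti₀ hpos h2
  refine step1.trans ?_
  rw [inv_le_iff_one_le_mul₀ hpos]
  nlinarith

/-- real-valued lower bound for the binomial coefficient -/
lemma choose_lower (t : ℕ) (ht : 1 ≤ t) (h2t : 2 * t ≤ n) :
    ((n:ℝ) / (2 * t)) ^ t ≤ (n.choose t : ℝ) := by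
  have hd : ((n + 1 - t : ℕ) : ℝ) ^ t ≤ (t : ℝ) ^ t * (n.choose t : ℝ) := by
    have h1 : (n + 1 - t) ^ t ≤ n.descFactorial t := by
      have := Nat.pow_sub_le_descFactorial n t
      simpa using this
    have h2 : n.descFactorial t = t.factorial * n.choose t :=
      Nat.descFactorial_eq_factorial_mul_choose n t
    have h3 : t.factorial ≤ t ^ t := Nat.factorial_le_pow t
    have : (n + 1 - t) ^ t ≤ t ^ t * n.choose t := by
      calc (n + 1 - t) ^ t ≤ t.factorial * n.choose t := h2 ▸ h1
        _ ≤ t ^ t * n.choose t := Nat.mul_le_mul_right _ h3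
    exact_mod_cast this
  have htpos : (0:ℝ) < t := by exact_mod_cast ht
  have hhalf : (n:ℝ) / 2 ≤ ((n + 1 - t : ℕ) : ℝ) := by
    have hle : t ≤ n := le_trans (by omega) h2t
    have : ((n + 1 - t : ℕ) : ℝ) = (n:ℝ) + 1 - t := by
      have : t ≤ n + 1 := by omega
      push_cast [Nat.cast_sub this]
      ring
    rw [this]
    have h2tr : 2 * (t:ℝ) ≤ n := by exact_mod_cast h2t
    linarith
  have hnn : (0:ℝ) ≤ (n:ℝ)/2 := by positivity
  have main : ((n:ℝ)/2) ^ t ≤ (t:ℝ)^t * (n.choose t : ℝ) :=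
    le_trans (pow_le_pow_left₀ hnn hhalf t) hd
  have : ((n:ℝ) / (2*t)) ^ t = ((n:ℝ)/2)^t / (t:ℝ)^t := by
    rw [div_pow, div_pow, mul_pow]
    ring
  rw [this, div_le_iff₀ (by positivity)]
  linarith [main]

/-- Key real inequality for the pairwise bound. -/
lemma pair_real_bound {a b : ℝ} {t : ℕ} (ha0 : 0 ≤ a) (hb0 : 0 ≤ b)
    (ha : a ≤ 1/2) (hb : b ≤ 1/2)
    (h2t : 2*t ≤ n) (hat : 2*a*t + 2*b*t ≤ 1) :
    (1 - a - b) ^ (n - 2*t) ≤ 3 * ((1-a)^(n-t) * (1-b)^(n-t)) := by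
  have ha1 : (0:ℝ) ≤ 1 - a := by linarith
  have hb1 : (0:ℝ) ≤ 1 - b := by linarith
  have hsplit : n - t = (n - 2*t) + t := by omega
  have step2 : ∀ c : ℝ, 0 ≤ c → c ≤ 1/2 →
      (1-c)^(n - 2*t) ≤ Real.exp (2*c*t) * (1-c)^(n-t) := by
    intro c hc0 hc1
    have hc1' : (0:ℝ) ≤ 1 - c := by linarith
    have hexp : Real.exp (-(2*c)) ^ t ≤ (1-c)^t :=
      pow_le_pow_left₀ (Real.exp_nonneg _) (exp_neg_two_le_one_sub hc0 hc1) t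
    have hexp2 : Real.exp (-(2*c)) ^ t = Real.exp (-(2*c*t)) := by
      rw [← Real.exp_nat_mul]; ring_nf
    have hmul : (1-c)^(n - 2*t) * Real.exp (-(2*c*t)) ≤ (1-c)^(n - t) := by
      rw [hsplit, pow_add, ← hexp2]
      exact mul_le_mul_of_nonneg_left hexp (pow_nonneg hc1' _)
    have hepos : (0:ℝ) < Real.exp (2*c*t) := Real.exp_pos _
    have final : (1-c)^(n-2*t) = Real.exp (2*c*t) * ((1-c)^(n-2*t) * Real.exp (-(2*c*t))) := by
      rw [← mul_assoc, mul_comm (Real.exp (2*c*t)), mul_assoc, ← Real.exp_add]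
      simp
    rw [final]
    exact mul_le_mul_of_nonneg_left hmul hepos.le
  have step1 : (1 - a - b)^(n - 2*t) ≤ (1-a)^(n-2*t) * (1-b)^(n-2*t) := by
    rw [← mul_pow]
    refine pow_le_pow_left₀ (by nlinarith) (by nlinarith) _
  have step3 : Real.exp (2*a*t) * Real.exp (2*b*t) ≤ 3 := by
    rw [← Real.exp_add]
    calc Real.exp (2*a*t + 2*b*t) ≤ Real.exp 1 := Real.exp_le_exp.mpr hat
      _ ≤ 3 := by
        have := Real.exp_one_lt_d9; linarith
  calc (1 - a - b)^(n - 2*t) ≤ (1-a)^(n-2*t) * (1-b)^(n-2*t) := step1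
    _ ≤ (Real.exp (2*a*t) * (1-a)^(n-t)) * (Real.exp (2*b*t) * (1-b)^(n-t)) := by
        refine mul_le_mul (step2 a ha0 ha) (step2 b hb0 hb) (pow_nonneg hb1 _) ?_
        positivity
    _ = (Real.exp (2*a*t) * Real.exp (2*b*t)) * ((1-a)^(n-t) * (1-b)^(n-t)) := by ring
    _ ≤ 3 * ((1-a)^(n-t) * (1-b)^(n-t)) := by
        refine mul_le_mul_of_nonneg_right step3 ?_
        positivity

lemma tendsto_log_nat : Tendsto (fun n : ℕ => Real.log n) atTop atTop :=
  Real.tendsto_log_atTop.comp tendsto_natCast_atTop_atTop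

lemma eventually_conds (K : ℝ) :
    ∃ N₀ : ℕ, ∀ n ≥ N₀, 3 ≤ n ∧ 4 * Real.log (Real.log n) ≤ Real.log n ∧
      8 * (Real.log n)^2 ≤ (n:ℝ) ∧ 2 * Real.log K ≤ Real.log (Real.log n) ∧
      1 ≤ Real.log (Real.log n) := by
  have tll : Tendsto (fun n : ℕ => Real.log (Real.log n)) atTop atTop :=
    Real.tendsto_log_atTop.comp tendsto_log_nat
  have h1 : ∀ᶠ n : ℕ in atTop, 3 ≤ n := eventually_ge_atTop 3
  have hy : ∀ᶠ y : ℝ in atTop, 4 * Real.log y ≤ y := by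
    have := (Real.isLittleO_log_id_atTop.bound (by norm_num : (0:ℝ) < 1/4))
    filter_upwards [this, eventually_ge_atTop (1:ℝ)] with y hb h1y
    have hlognn : 0 ≤ Real.log y := Real.log_nonneg h1y
    rw [Real.norm_eq_abs, Real.norm_eq_abs, abs_of_nonneg hlognn, id,
      abs_of_nonneg (by linarith : (0:ℝ) ≤ y)] at hb
    linarith
  have h2 : ∀ᶠ n : ℕ in atTop, 4 * Real.log (Real.log n) ≤ Real.log n :=
    tendsto_log_nat.eventually hy
  have hy2 : ∀ᶠ y : ℝ in atTop, 8 * (Real.log y)^2 ≤ y := by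
    have := ((Real.isLittleO_pow_log_id_atTop (n := 2)).bound (by norm_num : (0:ℝ) < 1/8))
    filter_upwards [this, eventually_ge_atTop (1:ℝ)] with y hb h1y
    have hlognn : 0 ≤ Real.log y ^ 2 := sq_nonneg _
    rw [Real.norm_eq_abs, Real.norm_eq_abs, abs_of_nonneg hlognn, id,
      abs_of_nonneg (by linarith : (0:ℝ) ≤ y)] at hb
    linarith
  have h3 : ∀ᶠ n : ℕ in atTop, 8 * (Real.log n)^2 ≤ (n:ℝ) :=
    tendsto_natCast_atTop_atTop.eventually hy2
  have h4 : ∀ᶠ n : ℕ in atTop, 2 * Real.log K ≤ Real.log (Real.log n) :=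
    tll.eventually_ge_atTop _
  have h5 : ∀ᶠ n : ℕ in atTop, (1:ℝ) ≤ Real.log (Real.log n) :=
    tll.eventually_ge_atTop _
  obtain ⟨N₀, hN₀⟩ := (eventually_atTop).mp (h1.and (h2.and (h3.and (h4.and h5))))
  exact ⟨N₀, fun n hn => by
    obtain ⟨a, b, c, d, e⟩ := hN₀ n hn
    exact ⟨a, b, c, d, e⟩⟩

/-- Lower bound on the total probability mass `∑ j, P(cnt j = t)`. -/
lemma total_lower (hp0 : ∀ j, 0 ≤ p j) (hp1 : ∑ j, p j = 1)
    {t : ℕ} {D : ℝ} (hD1 : 1 ≤ D) (hNpos : 0 < N) (hND : (N:ℝ) ≤ D * n)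
    (ht1 : 1 ≤ t) (h4t : 4*t ≤ n)
    (hKt : (2 * Real.exp 4 * D * t)^t ≤ (n:ℝ))
    (hp2 : ∀ j, p j ≤ 2*(t:ℝ)/n) :
    1 ≤ ∑ j, (n.choose t : ℝ) * p j ^ t * (1 - p j)^(n - t) := by
  have hnposn : 0 < n := by omega
  have hnpos : (0:ℝ) < n := by exact_mod_cast hnposn
  have htpos : (0:ℝ) < t := by exact_mod_cast ht1
  have ht1r : (1:ℝ) ≤ t := by exact_mod_cast ht1
  have h4tr : 4*(t:ℝ) ≤ n := by exact_mod_cast h4t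
  have h2t : 2*t ≤ n := by omega
  have hphalf : ∀ j, p j ≤ 1/2 := by
    intro j
    refine (hp2 j).trans ?_
    rw [div_le_iff₀ hnpos]
    linarith
  have hepos : (0:ℝ) < Real.exp 4 := Real.exp_pos _
  have hDpos : (0:ℝ) < D := by linarith
  -- per-bin exponential lower bound
  have claim : ∀ j, Real.exp (-(4*(t:ℝ))) ≤ (1 - p j)^(n - t) := by
    intro j
    have h1 : Real.exp (-(2*p j)) ^ (n - t) ≤ (1 - p j)^(n - t) :=
      pow_le_pow_left₀ (Real.exp_nonneg _) (exp_neg_two_le_one_sub (hp0 j) (hphalf j)) _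
    have h2 : Real.exp (-(2*p j)) ^ (n - t) = Real.exp (-(2 * p j * ((n - t : ℕ):ℝ))) := by
      rw [← Real.exp_nat_mul]; ring_nf
    have h3 : Real.exp (-(4*(t:ℝ))) ≤ Real.exp (-(2 * p j * ((n - t : ℕ):ℝ))) := by
      rw [Real.exp_le_exp]
      have hle1 : ((n - t : ℕ) : ℝ) ≤ (n:ℝ) := by exact_mod_cast Nat.sub_le n t
      have hle2 : p j * ((n - t : ℕ) : ℝ) ≤ p j * n :=
        mul_le_mul_of_nonneg_left hle1 (hp0 j)
      have hle3 : p j * (n:ℝ) ≤ 2*t := by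
        have := (le_div_iff₀ hnpos).mp (hp2 j)
        linarith
      linarith
    calc Real.exp (-(4*(t:ℝ))) ≤ Real.exp (-(2 * p j * ((n - t : ℕ):ℝ))) := h3
      _ = Real.exp (-(2*p j)) ^ (n - t) := h2.symm
      _ ≤ (1 - p j)^(n - t) := h1
  -- step 1: pull out the constant
  have s1 : (n.choose t : ℝ) * Real.exp (-(4*(t:ℝ))) * (∑ j, p j ^ t)
      ≤ ∑ j, (n.choose t : ℝ) * p j ^ t * (1 - p j)^(n - t) := by
    rw [Finset.mul_sum]
    refine Finset.sum_le_sum fun j _ => ?_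
    have h1 : (n.choose t : ℝ) * Real.exp (-(4*(t:ℝ))) * p j ^ t
        = ((n.choose t : ℝ) * p j ^ t) * Real.exp (-(4*(t:ℝ))) := by ring
    rw [h1]
    exact mul_le_mul_of_nonneg_left (claim j)
      (mul_nonneg (Nat.cast_nonneg _) (pow_nonneg (hp0 j) _))
  -- step 2: power mean
  have s2 : 1 / ((N:ℝ))^(t-1) ≤ ∑ j, p j ^ t := by
    have := pow_sum_div_card_le_sum_pow (s := (univ : Finset (Fin N))) (f := p)
      (fun i _ => hp0 i) (t-1)
    rw [hp1, one_pow, Finset.card_univ, Fintype.card_fin] at this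
    have ht' : t - 1 + 1 = t := by omega
    rwa [ht'] at this
  -- step 3: N ≤ D n
  have hNr : (0:ℝ) < N := by exact_mod_cast hNpos
  have s3 : 1 / (D*(n:ℝ))^(t-1) ≤ 1 / ((N:ℝ))^(t-1) := by
    refine one_div_le_one_div_of_le (by positivity) ?_
    exact pow_le_pow_left₀ (le_of_lt hNr) hND _
  -- step 4: choose lower bound
  have s4 : ((n:ℝ)/(2*t))^t ≤ (n.choose t : ℝ) := choose_lower t ht1 h2t
  -- the identity
  have hDn : (0:ℝ) < D * n := by positivity
  have hpowid : (D*(n:ℝ))^(t-1) = (D*n)^t / (D*n) := by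
    have ht' : t - 1 + 1 = t := by omega
    have : (D*(n:ℝ))^t = (D*n)^(t-1) * (D*n) := by
      rw [← pow_succ, ht']
    rw [this]
    field_simp
  have hexpid : Real.exp (-(4*(t:ℝ))) = ((Real.exp 4)⁻¹)^t := by
    rw [← Real.exp_neg, ← Real.exp_nat_mul]
    congr 1
    ring
  have hinner : (n:ℝ)/(2*t) * (Real.exp 4)⁻¹ * (D*n)⁻¹ = 1/(2*Real.exp 4*D*t) := by
    field_simp
  have hid : ((n:ℝ)/(2*t))^t * Real.exp (-(4*(t:ℝ))) * (1/(D*(n:ℝ))^(t-1))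
      = (D*n) * (1/(2*Real.exp 4*D*(t:ℝ)))^t := by
    rw [hexpid, hpowid]
    have h1 : (1:ℝ)/((D*(n:ℝ))^t/(D*n)) = (D*n) * ((D*n)⁻¹)^t := by
      rw [one_div_div, div_eq_mul_inv, inv_pow, mul_comm]
    rw [h1, ← hinner, mul_pow, mul_pow]
    ring
  -- final chain
  have hZpos : (0:ℝ) < 2*Real.exp 4*D*(t:ℝ) := by positivity
  have final : 1 ≤ (D*n) * (1/(2*Real.exp 4*D*(t:ℝ)))^t := by
    have h1 : (n:ℝ) * (1/(2*Real.exp 4*D*(t:ℝ)))^t ≤ (D*n) * (1/(2*Real.exp 4*D*(t:ℝ)))^t := by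
      refine mul_le_mul_of_nonneg_right ?_ (by positivity)
      nlinarith
    have h2 : 1 ≤ (n:ℝ) * (1/(2*Real.exp 4*D*(t:ℝ)))^t := by
      rw [div_pow, one_pow, mul_one_div, le_div_iff₀ (by positivity), one_mul]
      exact hKt
    linarith
  calc (1:ℝ) ≤ (D*n) * (1/(2*Real.exp 4*D*(t:ℝ)))^t := final
    _ = ((n:ℝ)/(2*t))^t * Real.exp (-(4*(t:ℝ))) * (1/(D*(n:ℝ))^(t-1)) := hid.symm
    _ ≤ (n.choose t : ℝ) * Real.exp (-(4*(t:ℝ))) * (1/(D*(n:ℝ))^(t-1)) := by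
        refine mul_le_mul_of_nonneg_right
          (mul_le_mul_of_nonneg_right s4 (Real.exp_nonneg _)) (by positivity)
    _ ≤ (n.choose t : ℝ) * Real.exp (-(4*(t:ℝ))) * (∑ j, p j ^ t) := by
        refine mul_le_mul_of_nonneg_left (s3.trans s2) ?_
        exact mul_nonneg (Nat.cast_nonneg _) (Real.exp_nonneg _)
    _ ≤ ∑ j, (n.choose t : ℝ) * p j ^ t * (1 - p j)^(n - t) := s1

end BP

set_option maxHeartbeats 2000000 in
open Real in
/-- `m = n` balls are thrown into `N = O(n)` bins, each ball independently choosing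
a bin according to an arbitrary distribution `p`; each bin is labeled by an
unordered pair of distinct servers from an `n`-element server set, and each ball is
sequentially assigned to the lesser-loaded server of its bin's pair.  Then the
expected maximum server load is at least `(1/2)·Ω(log n / log log n)`. -/
theorem pair_labeled_bins_expected_max_load :
    ∀ C > (0:ℝ), ∃ k₀ > (0:ℝ), ∃ N₀ : ℕ, ∀ n ≥ N₀, ∀ N : ℕ, 0 < N →
      (N : ℝ) ≤ C * n →
      ∀ label : Fin N → Fin n × Fin n, (∀ j, (label j).1 ≠ (label j).2) →
      ∀ p : Fin N → ℝ, (∀ j, 0 ≤ p j) → ∑ j, p j = 1 →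
      ∀ A : (Fin n → Fin N) → Fin n → Fin n,
        (∀ ω b, (A ω b = (label (ω b)).1 ∨ A ω b = (label (ω b)).2) ∧
          ∀ v, (v = (label (ω b)).1 ∨ v = (label (ω b)).2) →
            loadBefore (A ω) b (A ω b) ≤ loadBefore (A ω) b v) →
        (∑ ω : Fin n → Fin N, (∏ b, p (ω b)) * (maxLoad (A ω) : ℝ)) ≥
          (1 / 2) * (k₀ * (log n / log (log n))) := by
  intro C hC
  refine ⟨1/48, by norm_num, ?_⟩
  classical
  set D : ℝ := max C 1 with hD
  have hD1 : (1:ℝ) ≤ D := le_max_right _ _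
  set K : ℝ := 2 * Real.exp 4 * D with hKdef
  obtain ⟨N₀, hN₀⟩ := BP.eventually_conds K
  refine ⟨N₀, fun n hn N hNpos hNC label hlabel p hp0 hp1 A hA => ?_⟩
  obtain ⟨hn3, hx4, h8x, hlogK, hlam1⟩ := hN₀ n hn
  set x : ℝ := Real.log n with hxdef
  set lam : ℝ := Real.log x with hlamdef
  have hlampos : (0:ℝ) < lam := by linarith
  have hxpos : (0:ℝ) < x := by linarith
  set t : ℕ := ⌊x / (2 * lam)⌋₊ with htdef
  have hy2 : (2:ℝ) ≤ x / (2*lam) := by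
    rw [le_div_iff₀ (by positivity)]
    linarith
  have ht2 : 2 ≤ t := Nat.le_floor (by exact_mod_cast hy2)
  have ht1 : 1 ≤ t := by omega
  have htpos : (0:ℝ) < t := by exact_mod_cast ht1
  have ht1r : (1:ℝ) ≤ t := by exact_mod_cast ht1
  have htle : (t:ℝ) ≤ x / (2*lam) := Nat.floor_le (by positivity)
  have htge : x / (4*lam) ≤ (t:ℝ) := by
    have h1 : x/(2*lam) < (t:ℝ) + 1 := Nat.lt_floor_add_one _
    have h2 : x/(4*lam) = (x/(2*lam))/2 := by
      rw [div_div]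
      ring_nf
    rw [h2]
    linarith
  have htlex : (t:ℝ) ≤ x := by
    have h1 : x/(2*lam) ≤ x/1 := by
      refine div_le_div_of_nonneg_left hxpos.le (by norm_num) ?_
      linarith
    rw [div_one] at h1
    linarith
  have h8t : 8*(t:ℝ)^2 ≤ n := by nlinarith
  have hnr3 : (3:ℝ) ≤ n := by exact_mod_cast hn3
  have hnpos : (0:ℝ) < n := by linarith
  have h4tr : 4*(t:ℝ) ≤ n := by nlinarith
  have h4t : 4*t ≤ n := by exact_mod_cast h4tr
  have h2t : 2*t ≤ n := by omega
  rw [ge_iff_le]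
  show (1/2) * ((1/48) * (x / lam)) ≤
    ∑ ω : Fin n → Fin N, BP.W p ω * (maxLoad (A ω) : ℝ)
  have hgoal : (1/2) * ((1/48) * (x / lam)) ≤ (t:ℝ)/24 := by
    have he : (1/2) * ((1/48) * (x / lam)) = (x/(4*lam))/24 := by
      ring
    rw [he]
    linarith
  refine le_trans hgoal ?_
  -- key deterministic bound
  have hkey : ∀ (ω : Fin n → Fin N) (j : Fin N),
      (BP.cnt j ω : ℝ) ≤ 2 * (maxLoad (A ω) : ℝ) := by
    intro ω j
    have := BP.cnt_le_two_maxLoad label (A ω) ω (fun b => (hA ω b).1) j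
    exact_mod_cast this
  have hEnn : ∀ ω : Fin n → Fin N, 0 ≤ BP.W p ω * (maxLoad (A ω) : ℝ) :=
    fun ω => mul_nonneg (BP.W_nonneg hp0 ω) (Nat.cast_nonneg _)
  -- generic event lower bound
  have eventLB : ∀ (E : (Fin n → Fin N) → Prop) [DecidablePred E],
      (∀ ω, E ω → (t:ℝ) ≤ 2 * (maxLoad (A ω) : ℝ)) →
      ((t:ℝ)/2) * (∑ ω ∈ Finset.univ.filter E, BP.W p ω)
        ≤ ∑ ω : Fin n → Fin N, BP.W p ω * (maxLoad (A ω) : ℝ) := by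
    intro E _ hev
    calc ((t:ℝ)/2) * ∑ ω ∈ Finset.univ.filter E, BP.W p ω
        = ∑ ω ∈ Finset.univ.filter E, BP.W p ω * ((t:ℝ)/2) := by
          rw [Finset.mul_sum]
          exact Finset.sum_congr rfl fun ω _ => mul_comm _ _
      _ ≤ ∑ ω ∈ Finset.univ.filter E, BP.W p ω * (maxLoad (A ω) : ℝ) := by
          refine Finset.sum_le_sum fun ω hω => ?_
          have hEω : E ω := (Finset.mem_filter.mp hω).2
          have := hev ω hEω
          exact mul_le_mul_of_nonneg_left (by linarith) (BP.W_nonneg hp0 ω)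
      _ ≤ ∑ ω : Fin n → Fin N, BP.W p ω * (maxLoad (A ω) : ℝ) :=
          Finset.sum_le_sum_of_subset_of_nonneg (Finset.filter_subset _ _)
            (fun ω _ _ => hEnn ω)
  by_cases hbig : ∃ j, 2*(t:ℝ)/n ≤ p j
  · -- Case A : a heavy bin; its expectation alone is ≥ 2t
    obtain ⟨j, hj⟩ := hbig
    have hE := BP.expect_cnt (n := n) hp1 j
    have h2tle : 2*(t:ℝ) ≤ n * p j := by
      rw [div_le_iff₀ hnpos] at hj
      linarith
    have step : (t:ℝ) ≤ ∑ ω : Fin n → Fin N, BP.W p ω * (maxLoad (A ω) : ℝ) := by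
      calc (t:ℝ) ≤ ((n:ℝ) * p j)/2 := by linarith
        _ = (∑ ω : Fin n → Fin N, BP.W p ω * (BP.cnt j ω : ℝ))/2 := by rw [hE]
        _ = ∑ ω : Fin n → Fin N, BP.W p ω * ((BP.cnt j ω : ℝ)/2) := by
            rw [Finset.sum_div]
            exact Finset.sum_congr rfl fun ω _ => by ring
        _ ≤ ∑ ω : Fin n → Fin N, BP.W p ω * (maxLoad (A ω) : ℝ) := by
            refine Finset.sum_le_sum fun ω _ => ?_
            refine mul_le_mul_of_nonneg_left ?_ (BP.W_nonneg hp0 ω)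
            have := hkey ω j
            linarith
    linarith
  · -- Case B : all bins light
    push_neg at hbig
    have hple : ∀ j, p j ≤ 2*(t:ℝ)/n := fun j => (hbig j).le
    have hphalf : ∀ j, p j ≤ 1/2 := by
      intro j
      refine (hple j).trans ?_
      rw [div_le_iff₀ hnpos]
      linarith
    set q : Fin N → ℝ := fun j => (n.choose t : ℝ) * p j ^ t * (1 - p j)^(n - t) with hqdef
    have hq0 : ∀ j, 0 ≤ q j := fun j =>
      mul_nonneg (mul_nonneg (Nat.cast_nonneg _) (pow_nonneg (hp0 j) _))
        (pow_nonneg (by have := hphalf j; linarith) _)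
    have hqPr : ∀ j, ∑ ω ∈ Finset.univ.filter (fun ω : Fin n → Fin N => BP.cnt j ω = t),
        BP.W p ω = q j := fun j => BP.prob_cnt_eq hp1 j t
    have hKpos : (0:ℝ) < K := by
      rw [hKdef]
      positivity
    have hKt : (K * t)^t ≤ (n:ℝ) := by
      have hKt0 : (0:ℝ) < K * t := by positivity
      have hK2 : (2:ℝ) ≤ K := by
        rw [hKdef]
        nlinarith [Real.one_le_exp (by norm_num : (0:ℝ) ≤ 4)]
      have hlogle : Real.log (K * t) ≤ (3/2) * lam := by
        rw [Real.log_mul (ne_of_gt hKpos) (ne_of_gt htpos)]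
        have h1 : Real.log K ≤ lam/2 := by linarith
        have h2 : Real.log t ≤ lam := by
          rw [hlamdef]
          exact Real.log_le_log htpos htlex
        linarith
      have hlognn : 0 ≤ Real.log (K * t) := by
        refine Real.log_nonneg ?_
        nlinarith [hK2, ht1r]
      have hrw : (K*(t:ℝ))^t = Real.exp ((t:ℝ) * Real.log (K*t)) := by
        rw [← Real.exp_log hKt0, ← Real.exp_nat_mul, Real.exp_log hKt0]
      rw [hrw]
      have hle : (t:ℝ) * Real.log (K*t) ≤ x := by
        calc (t:ℝ) * Real.log (K*t) ≤ (x/(2*lam)) * ((3/2)*lam) :=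
            mul_le_mul htle hlogle hlognn (by positivity)
          _ = (3/4) * x := by field_simp; ring
          _ ≤ x := by linarith
      calc Real.exp ((t:ℝ) * Real.log (K*t)) ≤ Real.exp x := Real.exp_le_exp.mpr hle
        _ = n := by rw [hxdef]; exact Real.exp_log hnpos
    have hND : (N:ℝ) ≤ D * n := by
      refine hNC.trans ?_
      have : C ≤ D := le_max_left _ _
      nlinarith
    have hQtot : 1 ≤ ∑ j, q j := by
      rw [hqdef]
      refine BP.total_lower hp0 hp1 hD1 hNpos hND ht1 h4t ?_ hple
      rw [← hKdef]
      exact hKt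
    by_cases hbig2 : ∃ j, 1/6 < q j
    · -- one bin alone has probability ≥ 1/6 of getting exactly t balls
      obtain ⟨j, hj6⟩ := hbig2
      have hev := eventLB (fun ω => BP.cnt j ω = t) (fun ω hω => by
        have := hkey ω j
        rw [hω] at this
        exact this)
      rw [hqPr j] at hev
      have ht24 : (t:ℝ)/24 ≤ ((t:ℝ)/2) * q j := by
        have h6 : (1:ℝ)/6 ≤ q j := hj6.le
        nlinarith
      linarith
    · -- Bonferroni over a medium-mass subset
      push_neg at hbig2
      obtain ⟨S, hSsub, hS1, hS2⟩ := BP.exists_subset_sum_between Finset.univ q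
        (fun j _ => hbig2 j) (by norm_num) (le_trans (by norm_num) hQtot)
      have hpair : ∀ j ∈ S, ∀ j' ∈ S.erase j,
          ∑ ω ∈ Finset.univ.filter
            (fun ω : Fin n → Fin N => BP.cnt j ω = t ∧ BP.cnt j' ω = t), BP.W p ω
          ≤ 3 * (q j * q j') := by
        intro j hj j' hj'
        have hne : j ≠ j' := Ne.symm (Finset.mem_erase.mp hj').1
        have h1 := BP.prob_pair_le (n := n) hp0 hp1 hne t
        have hsum1 : 2*(p j)*(t:ℝ) + 2*(p j')*(t:ℝ) ≤ 1 := by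
          have h1' : p j * (n:ℝ) ≤ 2*t := by
            have := (le_div_iff₀ hnpos).mp (hple j)
            linarith
          have h2' : p j' * (n:ℝ) ≤ 2*t := by
            have := (le_div_iff₀ hnpos).mp (hple j')
            linarith
          have e1 : 2*(p j)*(t:ℝ)*(n:ℝ) ≤ 4*(t:ℝ)^2 := by nlinarith [htpos.le]
          have e2 : 2*(p j')*(t:ℝ)*(n:ℝ) ≤ 4*(t:ℝ)^2 := by nlinarith [htpos.le]
          nlinarith [hnpos]
        have h2 := BP.pair_real_bound (n := n) (hp0 j) (hp0 j') (hphalf j) (hphalf j')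
          h2t hsum1
        refine h1.trans ?_
        calc (n.choose t : ℝ)^2 * (p j ^ t * p j' ^ t * (1 - p j - p j')^(n - 2*t))
            ≤ (n.choose t : ℝ)^2 * (p j ^ t * p j' ^ t *
                (3 * ((1 - p j)^(n-t) * (1 - p j')^(n-t)))) := by
              refine mul_le_mul_of_nonneg_left ?_ (by positivity)
              refine mul_le_mul_of_nonneg_left h2 ?_
              exact mul_nonneg (pow_nonneg (hp0 j) _) (pow_nonneg (hp0 j') _)
          _ = 3 * (q j * q j') := by
              rw [hqdef]
              ring
      have hBon := BP.bonferroni (n := n) hp0 S t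
      have hmu : ∑ j ∈ S, ∑ ω ∈ Finset.univ.filter
          (fun ω : Fin n → Fin N => BP.cnt j ω = t), BP.W p ω = ∑ j ∈ S, q j :=
        Finset.sum_congr rfl fun j _ => hqPr j
      have hdouble : ∑ j ∈ S, ∑ j' ∈ S.erase j,
          ∑ ω ∈ Finset.univ.filter
            (fun ω : Fin n → Fin N => BP.cnt j ω = t ∧ BP.cnt j' ω = t), BP.W p ω
          ≤ 3 * (∑ j ∈ S, q j)^2 := by
        calc ∑ j ∈ S, ∑ j' ∈ S.erase j, ∑ ω ∈ Finset.univ.filter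
              (fun ω : Fin n → Fin N => BP.cnt j ω = t ∧ BP.cnt j' ω = t), BP.W p ω
            ≤ ∑ j ∈ S, ∑ j' ∈ S.erase j, 3 * (q j * q j') :=
              Finset.sum_le_sum fun j hj => Finset.sum_le_sum fun j' hj' =>
                hpair j hj j' hj'
          _ ≤ ∑ j ∈ S, ∑ j' ∈ S, 3 * (q j * q j') := by
              refine Finset.sum_le_sum fun j hj => ?_
              refine Finset.sum_le_sum_of_subset_of_nonneg (Finset.erase_subset _ _) ?_
              intro j' _ _
              exact mul_nonneg (by norm_num) (mul_nonneg (hq0 j) (hq0 j'))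
          _ = 3 * (∑ j ∈ S, q j)^2 := by
              rw [sq, Finset.sum_mul_sum, Finset.mul_sum]
              exact Finset.sum_congr rfl fun j _ => by rw [Finset.mul_sum]
      have hPrU : 1/12 ≤ ∑ ω ∈ Finset.univ.filter
          (fun ω : Fin n → Fin N => ∃ j ∈ S, BP.cnt j ω = t), BP.W p ω := by
        rw [hmu] at hBon
        have hq2 : 1/12 ≤ (∑ j ∈ S, q j) - (3/2)*(∑ j ∈ S, q j)^2 := by
          nlinarith [mul_nonneg (by linarith : (0:ℝ) ≤ (∑ j ∈ S, q j) - 1/6)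
            (by linarith : (0:ℝ) ≤ 2*(1/6) - (∑ j ∈ S, q j) + 0)]
        nlinarith [hBon, hdouble]
      have hev := eventLB (fun ω => ∃ j ∈ S, BP.cnt j ω = t) (fun ω hω => by
        obtain ⟨j, hjS, hjt⟩ := hω
        have := hkey ω j
        rw [hjt] at this
        exact this)
      have hfin : (t:ℝ)/24 ≤ ((t:ℝ)/2) * (∑ ω ∈ Finset.univ.filter
          (fun ω : Fin n → Fin N => ∃ j ∈ S, BP.cnt j ω = t), BP.W p ω) := by
        nlinarith [hPrU, htpos]
      linarith [hev]
end
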